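/- arXiv:2501.08993 — 4 statements merged into one kernel-verified Lean document; each statement's English description precedes it below -/
import Mathlib

section
/- Let R be a ring and (M_j)_{j∈J} a family of R-modules each with local endomorphism ring. If X is a direct summand of ⊕_{j∈J} M_j and End(X) is local, then X ≅ M_j for some j ∈ J. -/
universe u

open DirectSum

section ModuleDefs

variable (R : Type u) [Ring R]

/-- `g` is a pure epimorphism: `Hom(X, -)` lifts along `g` for every finitely presented `X`. -/
def IsPureEpi {L M : Type u} [AddCommGroup L] [AddCommGroup M] [Module R L] [Module R M]
    (g : L →ₗ[R] M) : Prop :=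
  ∀ (X : Type u) (_ : AddCommGroup X) (_ : Module R X), Module.FinitePresentation R X →
    ∀ h : X →ₗ[R] M, ∃ h' : X →ₗ[R] L, g.comp h' = h

/-- `f` is a pure monomorphism: it is injective and the projection onto its cokernel is a
pure epimorphism. -/
def IsPureMono {K L : Type u} [AddCommGroup K] [AddCommGroup L] [Module R K] [Module R L]
    (f : K →ₗ[R] L) : Prop :=
  Function.Injective f ∧ IsPureEpi R (LinearMap.range f).mkQ

/-- `M` is pure-injective: every map to `M` extends along pure monomorphisms. -/
def IsPureInjectiveModule (M : Type u) [AddCommGroup M] [Module R M] : Prop :=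
  ∀ (K L : Type u) (_ : AddCommGroup K) (_ : AddCommGroup L) (_ : Module R K) (_ : Module R L)
    (f : K →ₗ[R] L), IsPureMono R f → ∀ g : K →ₗ[R] M, ∃ h : L →ₗ[R] M, h.comp f = g

/-- `M` is `Σ`-pure-injective: every direct sum of copies of `M` is pure-injective. -/
def IsSigmaPureInjective (M : Type u) [AddCommGroup M] [Module R M] : Prop :=
  ∀ J : Type u, IsPureInjectiveModule R (DirectSum J fun _ : J => M)

/-- `X` is (isomorphic to) a direct summand of `Y`. -/
def IsDirectSummandOf (X Y : Type u) [AddCommGroup X] [AddCommGroup Y]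
    [Module R X] [Module R Y] : Prop :=
  ∃ (i : X →ₗ[R] Y) (p : Y →ₗ[R] X), p.comp i = LinearMap.id

/-- `X ∈ Add(M)`: `X` is a direct summand of a direct sum of copies of `M`. -/
def MemAdd (M : Type u) [AddCommGroup M] [Module R M]
    (X : Type u) [AddCommGroup X] [Module R X] : Prop :=
  ∃ I : Type u, IsDirectSummandOf R X (DirectSum I fun _ : I => M)

/-- `X ∈ Prod(M)`: `X` is a direct summand of a direct product of copies of `M`. -/
def MemProd (M : Type u) [AddCommGroup M] [Module R M]
    (X : Type u) [AddCommGroup X] [Module R X] : Prop :=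
  ∃ I : Type u, IsDirectSummandOf R X (I → M)

/-- `M` is product-rigid: every object of `Prod(M)` with local endomorphism ring is isomorphic
to a direct summand of `M`. -/
def IsProductRigid (M : Type u) [AddCommGroup M] [Module R M] : Prop :=
  ∀ (X : Type u) (_ : AddCommGroup X) (_ : Module R X),
    MemProd R M X → IsLocalRing (Module.End R X) → IsDirectSummandOf R X M

end ModuleDefs

/-- A set `I` is `ω`-measurable if it is uncountable and carries a nonprincipal countably
complete ultrafilter (equivalently, a countably additive non-trivial `{0,1}`-valued measure on
the full power set vanishing on singletons). -/
def IsOmegaMeasurable (I : Type u) : Prop :=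
  ¬ Countable I ∧ ∃ U : Ultrafilter I, (∀ x : I, ({x} : Set I) ∉ U) ∧
    ∀ s : ℕ → Set I, (∀ n, s n ∈ U) → (⋂ n, s n) ∈ U

lemma isUnit_or_isUnit_of_isUnit_add' {A : Type u} [Ring A] [IsLocalRing A] {a b : A}
    (h : IsUnit (a + b)) : IsUnit a ∨ IsUnit b := by
  rcases h with ⟨u, hu⟩
  have h1 : (↑u⁻¹ : A) * a + (↑u⁻¹ : A) * b = 1 := by
    rw [← mul_add, ← hu, Units.inv_mul]
  rcases IsLocalRing.isUnit_or_isUnit_of_add_one h1 with h' | h'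
  · left
    have : a = (u : A) * ((↑u⁻¹ : A) * a) := by rw [← mul_assoc, Units.mul_inv, one_mul]
    exact this ▸ (u.isUnit.mul h')
  · right
    have : b = (u : A) * ((↑u⁻¹ : A) * b) := by rw [← mul_assoc, Units.mul_inv, one_mul]
    exact this ▸ (u.isUnit.mul h')

lemma isUnit_sum_aux {A : Type u} [Ring A] [IsLocalRing A] {α : Type u} (s : Finset α)
    (f : α → A) (a : A) (h : IsUnit (a + ∑ j ∈ s, f j)) :
    IsUnit a ∨ ∃ j ∈ s, IsUnit (f j) := by
  classical
  induction s using Finset.induction generalizing a with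
  | empty => simp at h; exact Or.inl h
  | @insert b t hx ih =>
    rw [Finset.sum_insert hx, ← add_assoc] at h
    rcases ih (a + f b) h with h' | h'
    · rcases isUnit_or_isUnit_of_isUnit_add' h' with h'' | h''
      · exact Or.inl h''
      · exact Or.inr ⟨b, Finset.mem_insert_self _ _, h''⟩
    · obtain ⟨j, hj, hju⟩ := h'
      exact Or.inr ⟨j, Finset.mem_insert_of_mem hj, hju⟩

lemma idem_zero_or_one {A : Type u} [Ring A] [IsLocalRing A] {e : A}
    (he : e * e = e) : e = 0 ∨ e = 1 := by
  rcases IsLocalRing.isUnit_or_isUnit_of_add_one (a := e) (b := 1 - e)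
      (by rw [add_sub_cancel]) with h | h
  · right
    rcases h with ⟨u, hu⟩
    have huu : u * u = u := Units.ext (by rw [Units.val_mul, hu, he])
    have h1 : u = 1 := mul_eq_right.mp huu
    rw [← hu, h1, Units.val_one]
  · left
    rcases h with ⟨u, hu⟩
    have h2 : (1 - e) * (1 - e) = (1 - e) := by
      rw [mul_sub, sub_mul, sub_mul, one_mul, one_mul, mul_one, he]
      abel
    have huu : u * u = u := Units.ext (by rw [Units.val_mul, hu, h2])
    have h1 : u = 1 := mul_eq_right.mp huu
    have h3 : (1:A) - e = 1 := by rw [← hu, h1, Units.val_one]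
    exact sub_eq_self.mp h3

/-- **Walker–Warfield.** If `(M j)_{j ∈ J}` is a family of modules with local endomorphism
rings and `X` is a direct summand of `⨁ j, M j` with `End(X)` local, then `X ≅ M j` for
some `j`. -/
theorem summand_of_directSum_local {R : Type u} [Ring R] {J : Type u}
    (M : J → Type u) [∀ j, AddCommGroup (M j)] [∀ j, Module R (M j)]
    (hloc : ∀ j, IsLocalRing (Module.End R (M j)))
    (X : Type u) [AddCommGroup X] [Module R X]
    (hX : IsDirectSummandOf R X (DirectSum J M))
    (hXloc : IsLocalRing (Module.End R X)) :
    ∃ j : J, Nonempty (X ≃ₗ[R] M j) := by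
  classical
  obtain ⟨i, p, hpi⟩ := hX
  haveI hnt : Nontrivial (Module.End R X) := hXloc.toNontrivial
  have hXne : ∃ x : X, x ≠ 0 := by
    by_contra h
    push_neg at h
    have h1 : (1 : Module.End R X) = 0 := LinearMap.ext fun x => by simp [h x, h (0:X)]
    exact one_ne_zero h1
  obtain ⟨x₀, hx₀⟩ := hXne
  set y : DirectSum J M := i x₀ with hy
  set φ : J → Module.End R X := fun j =>
    p ∘ₗ (lof R J M j) ∘ₗ (component R J M j) ∘ₗ i with hφ
  set F : Finset J := DFinsupp.support y with hF
  set ψ : Module.End R X := 1 - ∑ j ∈ F, φ j with hψdef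
  have key : IsUnit ψ ∨ ∃ j ∈ F, IsUnit (φ j) := by
    apply isUnit_sum_aux F φ ψ
    have h1 : ψ + ∑ j ∈ F, φ j = 1 := by rw [hψdef]; abel
    rw [h1]; exact isUnit_one
  have hψx : ψ x₀ = 0 := by
    have hsum : (∑ j ∈ F, φ j) x₀ = x₀ := by
      have h2 : (∑ j ∈ F, φ j) x₀ = ∑ j ∈ F, p ((lof R J M j) (y j)) := by
        rw [LinearMap.sum_apply]
        rfl
      rw [h2, ← map_sum]
      have hss : (∑ j ∈ F, (lof R J M j) (y j)) = y := by
        simpa [lof_eq_of] using DirectSum.sum_support_of y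
      rw [hss, hy]
      exact congrFun (congrArg DFunLike.coe hpi) x₀
    rw [hψdef]
    simp [hsum]
  rcases key with hu | ⟨j, _, hu⟩
  · exfalso
    rcases hu with ⟨u, hu⟩
    have h1 : (↑u⁻¹ * ↑u : Module.End R X) x₀ = x₀ := by
      rw [Units.inv_mul]; rfl
    rw [Module.End.mul_apply, hu, hψx, map_zero] at h1
    exact hx₀ h1.symm
  · set f : X →ₗ[R] M j := (component R J M j) ∘ₗ i with hf
    set g : M j →ₗ[R] X := p ∘ₗ (lof R J M j) with hg
    have hgf : φ j = g ∘ₗ f := by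
      rw [hφ, hg, hf]
      rfl
    rcases hu with ⟨u, hu⟩
    set w : Module.End R X := ↑u⁻¹ with hw
    have hleft : (w ∘ₗ g) ∘ₗ f = LinearMap.id := by
      have h3 : w * (φ j) = 1 := by rw [hw, ← hu, Units.inv_mul]
      rw [hgf] at h3
      calc (w ∘ₗ g) ∘ₗ f = w ∘ₗ (g ∘ₗ f) := by rw [LinearMap.comp_assoc]
        _ = LinearMap.id := h3
    set e : Module.End R (M j) := f ∘ₗ (w ∘ₗ g) with he
    have hee : e * e = e := by
      rw [he, Module.End.mul_eq_comp]
      calc (f ∘ₗ (w ∘ₗ g)) ∘ₗ (f ∘ₗ (w ∘ₗ g))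
          = f ∘ₗ (((w ∘ₗ g) ∘ₗ f) ∘ₗ (w ∘ₗ g)) := by
            simp only [LinearMap.comp_assoc]
        _ = f ∘ₗ (w ∘ₗ g) := by rw [hleft, LinearMap.id_comp]
    haveI := hloc j
    rcases idem_zero_or_one hee with h0 | h1
    · exfalso
      have h4 : (LinearMap.id : X →ₗ[R] X) = ((w ∘ₗ g) ∘ₗ e) ∘ₗ f := by
        calc (LinearMap.id : X →ₗ[R] X) = LinearMap.id ∘ₗ LinearMap.id := by
              rw [LinearMap.id_comp]
          _ = ((w ∘ₗ g) ∘ₗ f) ∘ₗ ((w ∘ₗ g) ∘ₗ f) := by rw [hleft]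
          _ = ((w ∘ₗ g) ∘ₗ e) ∘ₗ f := by
              rw [he]; simp only [LinearMap.comp_assoc]
      rw [h0] at h4
      have hz : x₀ = 0 := by
        have h5 := congrFun (congrArg DFunLike.coe h4) x₀
        simpa using h5
      exact hx₀ hz
    · have hright : f ∘ₗ (w ∘ₗ g) = LinearMap.id := by
        rw [← he, h1]; rfl
      exact ⟨j, ⟨LinearEquiv.ofLinear f (w ∘ₗ g) hright hleft⟩⟩
end

section
/- Let R be a ring and M an R-module. Then M is product-complete (i.e. Prod(M) ⊆ Add(M)) if and only if Add(M) is a preenveloping class in Mod-R. -/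
universe u

open DirectSum

variable (R : Type u) [Ring R]

/-- A class of `R`-modules is preenveloping if every module admits a preenvelope into the
class. -/
def IsPreenvelopingClass (P : (N : Type u) → [AddCommGroup N] → [Module R N] → Prop) : Prop :=
  ∀ (N : Type u) (_ : AddCommGroup N) (_ : Module R N),
    ∃ (C : Type u) (_ : AddCommGroup C) (_ : Module R C) (g : N →ₗ[R] C), P C ∧
      ∀ (C' : Type u) (_ : AddCommGroup C') (_ : Module R C') (g' : N →ₗ[R] C'),
        P C' → ∃ h : C →ₗ[R] C', h.comp g = g'


namespace PCaux

variable {R : Type u} [Ring R]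

/-- A (possibly infinitary) homogeneous linear system: variables `Λ`, a set of rows
(each row a finitely supported `R`-coefficient vector), and a distinguished variable. -/
structure Sys (R : Type u) [Ring R] : Type (u+1) where
  Λ : Type u
  E : Set (Λ →₀ R)
  p : Λ

/-- The subgroup of `X` defined by the system: values at the distinguished variable
of solutions of the system. -/
def Sys.H (S : Sys R) (X : Type u) [AddCommGroup X] [Module R X] : Set X :=
  {x | ∃ w : S.Λ → X, w S.p = x ∧ ∀ ρ ∈ S.E, (ρ.sum fun q r => r • w q) = 0}

variable {S : Sys R} {X Y : Type u} [AddCommGroup X] [Module R X]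
  [AddCommGroup Y] [Module R Y]

theorem Sys.H.zero : (0 : X) ∈ S.H X := by
  refine ⟨0, rfl, fun ρ _ => ?_⟩
  simp [Finsupp.sum]

theorem Sys.H.add {x y : X} (hx : x ∈ S.H X) (hy : y ∈ S.H X) : x + y ∈ S.H X := by
  obtain ⟨w, hw, hsol⟩ := hx
  obtain ⟨v, hv, hvsol⟩ := hy
  refine ⟨w + v, by simp [hw, hv], fun ρ hρ => ?_⟩
  have := hsol ρ hρ
  have := hvsol ρ hρ
  simp only [Finsupp.sum, Pi.add_apply, smul_add, Finset.sum_add_distrib] at *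
  simp [*]

theorem Sys.H.neg {x : X} (hx : x ∈ S.H X) : -x ∈ S.H X := by
  obtain ⟨w, hw, hsol⟩ := hx
  refine ⟨-w, by simp [hw], fun ρ hρ => ?_⟩
  have := hsol ρ hρ
  simp only [Finsupp.sum, Pi.neg_apply, smul_neg, Finset.sum_neg_distrib] at *
  simp [*]

theorem Sys.H.sub {x y : X} (hx : x ∈ S.H X) (hy : y ∈ S.H X) : x - y ∈ S.H X := by
  rw [sub_eq_add_neg]; exact Sys.H.add hx (Sys.H.neg hy)

theorem Sys.H.sum {ι : Type*} (s : Finset ι) (f : ι → X) (h : ∀ i ∈ s, f i ∈ S.H X) :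
    (∑ i ∈ s, f i) ∈ S.H X := by
  classical
  induction s using Finset.induction_on with
  | empty => simpa using Sys.H.zero
  | insert a s hni ih =>
      rw [Finset.sum_insert hni]
      exact Sys.H.add (h a (Finset.mem_insert_self a s))
        (ih fun i hi => h i (Finset.mem_insert_of_mem hi))

theorem Sys.H.map (f : X →ₗ[R] Y) {x : X} (hx : x ∈ S.H X) : f x ∈ S.H Y := by
  obtain ⟨w, hw, hsol⟩ := hx
  refine ⟨f ∘ w, by simp [hw], fun ρ hρ => ?_⟩
  have h0 := congrArg f (hsol ρ hρ)
  simpa only [Finsupp.sum, map_sum, map_smul, map_zero, Function.comp] using h0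

/-- Assemble solutions coordinatewise in a product. -/
theorem Sys.H.pi {I : Type u} {x : I → X} (hx : ∀ i, x i ∈ S.H X) :
    x ∈ S.H (I → X) := by
  choose w hw hsol using hx
  refine ⟨fun q i => w i q, funext fun i => hw i, fun ρ hρ => ?_⟩
  funext i
  have := hsol i ρ hρ
  simpa only [Finsupp.sum, Finset.sum_apply, Pi.smul_apply, Pi.zero_apply] using this


variable {M : Type u} [AddCommGroup M] [Module R M]

/-- Assemble solutions coordinatewise in a direct sum. -/
theorem Sys.H.dsum {K : Type u} {v : DirectSum K fun _ : K => M}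
    (hv : ∀ k, v k ∈ S.H M) : v ∈ S.H (DirectSum K fun _ : K => M) := by
  classical
  choose w0 hw0 hsol0 using hv
  have hwp : ∀ k, (if v k = 0 then (0 : S.Λ → M) else w0 k) S.p = v k := by
    intro k
    split_ifs with h
    · simp [h]
    · exact hw0 k
  have hwsol : ∀ k, ∀ ρ ∈ S.E,
      (ρ.sum fun q r => r • (if v k = 0 then (0 : S.Λ → M) else w0 k) q) = 0 := by
    intro k ρ hρ
    split_ifs with h
    · simp [Finsupp.sum]
    · exact hsol0 k ρ hρ
  refine ⟨fun q => DFinsupp.mk v.support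
      (fun k => (if v k.1 = 0 then (0 : S.Λ → M) else w0 k.1) q), ?_, fun ρ hρ => ?_⟩
  · apply DFinsupp.ext; intro k
    rw [DFinsupp.mk_apply]
    split
    · exact hwp k
    · exact (DFinsupp.notMem_support_iff.1 (by assumption)).symm
  · apply DFinsupp.ext; intro k
    rw [Finsupp.sum, DFinsupp.finset_sum_apply]
    have hterm : ∀ q ∈ ρ.support,
        ((ρ q • DFinsupp.mk v.support
          (fun k : ↥v.support => (if v k.1 = 0 then (0 : S.Λ → M) else w0 k.1) q) :
            DirectSum K fun _ : K => M)) k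
        = ρ q • (if v k = 0 then (0 : S.Λ → M) else w0 k) q := by
      intro q _
      rw [DFinsupp.smul_apply, DFinsupp.mk_apply]
      split
      · rfl
      · have hv0 : v k = 0 := DFinsupp.notMem_support_iff.1 (by assumption)
        simp [hv0]
    have h2 := hwsol k ρ hρ
    rw [Finsupp.sum] at h2
    refine ((Finset.sum_congr rfl hterm).trans h2).trans ?_
    simp

theorem Sys.H.component {K : Type u} {v : DirectSum K fun _ : K => M}
    (hv : v ∈ S.H (DirectSum K fun _ : K => M)) (k : K) : v k ∈ S.H M :=
  Sys.H.map (DirectSum.component R K (fun _ => M) k) hv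


set_option maxHeartbeats 2000000 in
/-- Chase-type chain condition: if every power of `M` is a direct summand of a direct sum of
copies of `M`, there is no strictly descending chain of finitary-definable subgroups of `M`. -/
theorem chainStab
    (hPC : ∀ I : Type u, ∃ (J : Type u) (e : (I → M) →ₗ[R] DirectSum J fun _ : J => M)
      (r : (DirectSum J fun _ : J => M) →ₗ[R] (I → M)), r.comp e = LinearMap.id)
    (G : ℕ → Sys R)
    (hdesc : ∀ n, (G (n+1)).H M ⊆ (G n).H M)
    (hstrict : ∀ n, ∃ x, x ∈ (G n).H M ∧ x ∉ (G (n+1)).H M) : False := by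
  classical
  have Hmono : ∀ {a b : ℕ}, a ≤ b → (G b).H M ⊆ (G a).H M := by
    intro a b hab
    induction b, hab using Nat.le_induction with
    | base => exact subset_rfl
    | succ n hn ih => exact (hdesc n).trans ih
  set μ : Type u := Set (M ⊕ ULift.{u} ℕ) with hμ
  obtain ⟨J, e, r, hre⟩ := hPC (μ × ℕ)
  have hre' : ∀ z : (μ × ℕ) → M, r (e z) = z := by
    intro z
    have := DFunLike.congr_fun hre z
    simpa using this
  set Q : ℕ → Set ((μ × ℕ) → M) :=
    fun n => {z | ∀ q : μ × ℕ, (q.2 < n → z q = 0) ∧ z q ∈ (G q.2).H M} with hQ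
  by_cases hcase : ∀ (n : ℕ) (E : Finset J), ∃ z ∈ Q n, ∃ j, j ∉ E ∧ ∃ m, e z j ∉ (G m).H M
  · -- Chase's recursion: build an element of the product whose image has infinite support.
    choose zf hzQ jf hjE mf hjnot using hcase
    set st : ℕ → ℕ × Finset J := fun t => Nat.rec ((0 : ℕ), (∅ : Finset J))
      (fun _ pr => (max (mf pr.1 pr.2 + 1) (pr.1 + 1),
        pr.2 ∪ (e (zf pr.1 pr.2)).support)) t with hst
    set nt : ℕ → ℕ := fun t => (st t).1 with hnt
    set Et : ℕ → Finset J := fun t => (st t).2 with hEt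
    set zt : ℕ → (μ × ℕ) → M := fun t => zf (nt t) (Et t) with hzt
    set jt : ℕ → J := fun t => jf (nt t) (Et t) with hjt
    have hstep : ∀ t, st (t+1) = (max (mf (nt t) (Et t) + 1) (nt t + 1),
        Et t ∪ (e (zt t)).support) := fun t => rfl
    have hnsucc : ∀ t, nt (t+1) = max (mf (nt t) (Et t) + 1) (nt t + 1) :=
      fun t => congrArg Prod.fst (hstep t)
    have hEsucc : ∀ t, Et (t+1) = Et t ∪ (e (zt t)).support :=
      fun t => congrArg Prod.snd (hstep t)
    have hnlt : ∀ t, nt t < nt (t+1) := by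
      intro t
      rw [hnsucc t]
      exact lt_of_lt_of_le (Nat.lt_succ_self _) (le_max_right _ _)
    have hmflt : ∀ t, mf (nt t) (Et t) < nt (t+1) := by
      intro t
      rw [hnsucc t]
      exact lt_of_lt_of_le (Nat.lt_succ_self _) (le_max_left _ _)
    have hnmono : ∀ {s t}, s ≤ t → nt s ≤ nt t := by
      intro s t hst'
      induction t, hst' using Nat.le_induction with
      | base => exact le_rfl
      | succ n hn ih => exact ih.trans (hnlt n).le
    have hnget : ∀ t, t ≤ nt t := by
      intro t
      induction t with
      | zero => exact Nat.zero_le _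
      | succ n ih => exact Nat.succ_le_of_lt (lt_of_le_of_lt ih (hnlt n))
    have hEmono : ∀ {s t}, s ≤ t → Et s ⊆ Et t := by
      intro s t hst'
      induction t, hst' using Nat.le_induction with
      | base => exact subset_rfl
      | succ n hn ih => exact ih.trans (by rw [hEsucc n]; exact Finset.subset_union_left)
    have hsuppE : ∀ t, (e (zt t)).support ⊆ Et (t+1) := by
      intro t; rw [hEsucc t]; exact Finset.subset_union_right
    -- properties of the chosen elements
    have hzt0 : ∀ t q, q.2 < nt t → zt t q = 0 := fun t q h => ((hzQ (nt t) (Et t)) q).1 h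
    have hztH : ∀ t (q : μ × ℕ), zt t q ∈ (G q.2).H M := fun t q => ((hzQ (nt t) (Et t)) q).2
    have hjEt : ∀ t, jt t ∉ Et t := fun t => hjE (nt t) (Et t)
    have hjnott : ∀ t, e (zt t) (jt t) ∉ (G (mf (nt t) (Et t))).H M := fun t => hjnot _ _
    have hjnott' : ∀ t, e (zt t) (jt t) ∉ (G (nt (t+1))).H M := by
      intro t h
      exact hjnott t (Hmono (hmflt t).le h)
    have hjsupp : ∀ t, jt t ∈ (e (zt t)).support := by
      intro t
      rw [DFinsupp.mem_support_iff]
      intro h0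
      exact hjnott' t (h0 ▸ Sys.H.zero)
    -- the diagonal element
    set zStar : (μ × ℕ) → M := fun q => ∑ t ∈ Finset.range (q.2+1), zt t q with hzStar
    set tail : ℕ → (μ × ℕ) → M := fun T q =>
      ∑ t ∈ (Finset.range (q.2+1)).filter (fun t => T+1 ≤ t), zt t q with htail
    have hdecomp : ∀ T, zStar = (fun q => ∑ t ∈ Finset.range (T+1), zt t q) + tail T := by
      intro T
      funext q
      have hsplit := Finset.sum_filter_add_sum_filter_not (Finset.range (q.2+1))
        (fun t => T+1 ≤ t) (fun t => zt t q)
      have h1 : ∑ t ∈ (Finset.range (q.2+1)).filter (fun t => ¬ (T+1 ≤ t)), zt t q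
          = ∑ t ∈ Finset.range (T+1), zt t q := by
        apply Finset.sum_subset
        · intro t ht
          simp only [Finset.mem_filter, Finset.mem_range, not_le] at ht
          simp only [Finset.mem_range]
          omega
        · intro t ht hnt'
          simp only [Finset.mem_filter, Finset.mem_range, not_le, not_and, not_lt] at hnt'
          simp only [Finset.mem_range] at ht
          apply hzt0
          calc q.2 < t := by
                by_contra hc
                push_neg at hc
                exact absurd (hnt' (by omega)) (by omega)
            _ ≤ nt t := hnget t
      rw [Pi.add_apply]
      show ∑ t ∈ Finset.range (q.2+1), zt t q = _
      rw [← hsplit, h1, add_comm]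
    have htailH : ∀ T, tail T ∈ (G (nt (T+1))).H ((μ × ℕ) → M) := by
      intro T
      apply Sys.H.pi
      intro q
      apply Sys.H.sum
      intro t ht
      simp only [Finset.mem_filter, Finset.mem_range] at ht
      by_cases hq : q.2 < nt t
      · rw [hzt0 t q hq]; exact Sys.H.zero
      · push_neg at hq
        exact Hmono (hnmono ht.2) (Hmono hq (hztH t q))
    have hkey : ∀ T, e zStar (jt T) ≠ 0 := by
      intro T h0
      have hdec := congrArg e (hdecomp T)
      rw [map_add] at hdec
      have hsum : e (fun q => ∑ t ∈ Finset.range (T+1), zt t q)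
          = ∑ t ∈ Finset.range (T+1), e (zt t) := by
        have : (fun q => ∑ t ∈ Finset.range (T+1), zt t q)
            = ∑ t ∈ Finset.range (T+1), zt t := by
          funext q
          rw [Finset.sum_apply]
        rw [this, map_sum]
      rw [hsum] at hdec
      have happ := congrArg (fun v => DirectSum.component R J (fun _ => M) (jt T) v) hdec
      simp only [map_add, map_sum] at happ
      -- components
      have hcomp : ∀ v : DirectSum J fun _ : J => M,
          DirectSum.component R J (fun _ => M) (jt T) v = v (jt T) := fun v => rfl
      rw [hcomp, h0] at happ
      have hzero : ∀ t ∈ Finset.range T,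
          DirectSum.component R J (fun _ => M) (jt T) (e (zt t)) = 0 := by
        intro t ht
        simp only [Finset.mem_range] at ht
        rw [hcomp]
        exact DFinsupp.notMem_support_iff.1
          (fun hmem => hjEt T (hEmono (Nat.succ_le_of_lt ht) (hsuppE t hmem)))
      have hsplit2 : ∑ t ∈ Finset.range (T+1),
          DirectSum.component R J (fun _ => M) (jt T) (e (zt t))
          = e (zt T) (jt T) := by
        rw [Finset.sum_range_succ]
        rw [Finset.sum_eq_zero hzero, zero_add, hcomp]
      rw [hsplit2] at happ
      -- tail component is in the subgroup
      have htc : DirectSum.component R J (fun _ => M) (jt T) (e (tail T))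
          ∈ (G (nt (T+1))).H M :=
        Sys.H.map _ (Sys.H.map e (htailH T))
      have : e (zt T) (jt T) ∈ (G (nt (T+1))).H M := by
        have heq : e (zt T) (jt T)
            = - (DirectSum.component R J (fun _ => M) (jt T) (e (tail T))) :=
          eq_neg_of_add_eq_zero_left happ.symm
        rw [heq]
        exact Sys.H.neg htc
      exact hjnott' T this
    have hjinj : Function.Injective jt := by
      intro s t hst'
      by_contra hne
      rcases Nat.lt_or_ge s t with h | h
      · exact hjEt t (hst' ▸ hEmono (Nat.succ_le_of_lt h) (hsuppE s (hjsupp s)))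
      · have h' : t < s := by omega
        exact hjEt s (hst'.symm ▸ hEmono (Nat.succ_le_of_lt h') (hsuppE t (hjsupp t)))
    have hfin : ((e zStar).support : Set J).Finite := (e zStar).support.finite_toSet
    have hinf : ((e zStar).support : Set J).Infinite :=
      Set.infinite_of_injective_forall_mem hjinj
        (fun T => Finset.mem_coe.2 (DFinsupp.mem_support_iff.2 (hkey T)))
    exact hinf hfin
  · push_neg at hcase
    obtain ⟨nb, E, hB⟩ := hcase
    obtain ⟨xb, hxb, hxbn⟩ := hstrict nb
    set zA : Set μ → (μ × ℕ) → M := fun A q => if q.2 = nb ∧ q.1 ∈ A then xb else 0 with hzA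
    have hzAQ : ∀ A, zA A ∈ Q nb := by
      intro A q
      constructor
      · intro hlt
        rw [hzA]; dsimp only
        rw [if_neg]; rintro ⟨h1, _⟩; omega
      · rw [hzA]; dsimp only
        split_ifs with h
        · rw [h.1]; exact hxb
        · exact Sys.H.zero
    have hval : ∀ (As : Set μ) (α : μ), zA As (α, nb) = if α ∈ As then xb else 0 := by
      intro As α; rw [hzA]; dsimp only
      by_cases h : α ∈ As
      · rw [if_pos ⟨rfl, h⟩, if_pos h]
      · rw [if_neg (fun hh => h hh.2), if_neg h]
    set Θ : Set μ → (↥E → M) := fun A j => e (zA A) j.1 with hΘ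
    have hΘinj : Function.Injective Θ := by
      intro A B hAB
      set z : (μ × ℕ) → M := zA A - zA B with hz
      have hzQn : z ∈ Q nb := by
        intro q
        obtain ⟨hA1, hA2⟩ := hzAQ A q
        obtain ⟨hB1, hB2⟩ := hzAQ B q
        constructor
        · intro hlt
          rw [hz, Pi.sub_apply, hA1 hlt, hB1 hlt, sub_zero]
        · rw [hz, Pi.sub_apply]
          exact Sys.H.sub hA2 hB2
      have hEz : ∀ j ∈ E, e z j = 0 := by
        intro j hj
        have hj' := congrFun hAB ⟨j, hj⟩
        rw [hΘ] at hj'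
        dsimp only at hj'
        rw [hz, map_sub, DFinsupp.sub_apply, hj', sub_self]
      have hjz : ∀ j, j ∉ E → ∀ m, e z j ∈ (G m).H M := fun j hj m => hB z hzQn j hj m
      have hcoord : ∀ α : μ, z (α, nb) ∈ (G (nb+1)).H M := by
        intro α
        have hzr : z = r (e z) := (hre' z).symm
        have hsup : e z = ∑ j ∈ (e z).support, DirectSum.of (fun _ : J => M) j (e z j) :=
          (DirectSum.sum_support_of _).symm
        have hexp : z (α, nb)
            = ∑ j ∈ (e z).support, r (DirectSum.of (fun _ : J => M) j (e z j)) (α, nb) := by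
          conv_lhs => rw [hzr, hsup, map_sum]
          rw [Finset.sum_apply]
        rw [hexp]
        apply Sys.H.sum
        intro j _
        by_cases hjE' : j ∈ E
        · rw [hEz j hjE']
          rw [map_zero, map_zero]
          exact Sys.H.zero
        · have hmem := hjz j hjE' (nb+1)
          have := Sys.H.map ((LinearMap.proj (α, nb) : ((μ × ℕ) → M) →ₗ[R] M).comp
              (r.comp (DirectSum.lof R J (fun _ => M) j))) hmem
          simpa [DirectSum.lof_eq_of] using this
      ext α
      by_cases hα : α ∈ A <;> by_cases hβ : α ∈ B
      · simp [hα, hβ]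
      · exfalso
        have hc := hcoord α
        rw [hz, Pi.sub_apply, hval A α, hval B α, if_pos hα, if_neg hβ, sub_zero] at hc
        exact hxbn hc
      · exfalso
        have hc := hcoord α
        rw [hz, Pi.sub_apply, hval A α, hval B α, if_neg hα, if_pos hβ, zero_sub] at hc
        exact hxbn (by simpa using Sys.H.neg hc)
      · simp [hα, hβ]
    -- cardinality contradiction
    have hcard := Cardinal.mk_le_of_injective hΘinj
    set c := Cardinal.mk (M ⊕ ULift.{u} ℕ) with hc
    have hμ2 : Cardinal.mk μ = 2 ^ c := Cardinal.mk_set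
    have hMc : Cardinal.mk M ≤ c := Cardinal.mk_le_of_injective Sum.inl_injective
    have hℵc : Cardinal.aleph0 ≤ c := by
      have h := Cardinal.mk_le_of_injective
        (f := (Sum.inr : ULift.{u} ℕ → M ⊕ ULift.{u} ℕ)) Sum.inr_injective
      rwa [Cardinal.mk_uLift, Cardinal.mk_nat, Cardinal.lift_aleph0] at h
    have h2 : Cardinal.mk (↥E → M) ≤ 2 ^ c := by
      have e1 : Cardinal.mk (↥E → M) = Cardinal.mk M ^ Cardinal.mk ↥E :=
        (Cardinal.power_def M ↥E).symm
      rw [e1]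
      calc Cardinal.mk M ^ Cardinal.mk ↥E ≤ (2 ^ c) ^ Cardinal.mk ↥E :=
            Cardinal.power_le_power_right (hMc.trans (Cardinal.cantor c).le)
        _ ≤ (2 ^ c) ^ Cardinal.aleph0 := by
            apply Cardinal.power_le_power_left
            · intro h0
              exact absurd (h0 ▸ Cardinal.cantor c) (by simp)
            · exact (Cardinal.lt_aleph0_of_finite ↥E).le
        _ = 2 ^ (c * Cardinal.aleph0) := Cardinal.power_mul.symm
        _ = 2 ^ c := by
            rw [Cardinal.mul_eq_max hℵc le_rfl, max_eq_left hℵc]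
    have hfinal : (2 : Cardinal) ^ ((2 : Cardinal) ^ c) ≤ (2 : Cardinal) ^ c := by
      have hsetμ : Cardinal.mk (Set μ) = 2 ^ ((2 : Cardinal) ^ c) := by
        rw [Cardinal.mk_set, hμ2]
      rw [← hsetμ]
      exact hcard.trans h2
    exact absurd hfinal (not_le.2 (Cardinal.cantor _))

/-- Existence of minimal members among definable subgroups of a direct sum of copies of `M`. -/
theorem minDsum
    (hPC : ∀ I : Type u, ∃ (J : Type u) (e : (I → M) →ₗ[R] DirectSum J fun _ : J => M)
      (r : (DirectSum J fun _ : J => M) →ₗ[R] (I → M)), r.comp e = LinearMap.id)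
    (K : Type u) (𝒦 : Set (Set (DirectSum K fun _ : K => M))) (hne : 𝒦.Nonempty)
    (hrep : ∀ A ∈ 𝒦, ∃ S : Sys R, A = S.H (DirectSum K fun _ : K => M)) :
    ∃ A ∈ 𝒦, ∀ B ∈ 𝒦, B ⊆ A → B = A := by
  classical
  by_contra hmin
  push_neg at hmin
  -- hmin : ∀ A ∈ 𝒦, ∃ B ∈ 𝒦, B ⊆ A ∧ B ≠ A
  obtain ⟨A0, hA0⟩ := hne
  choose! F hF1 hF2 hF3 using hmin
  set seq : ℕ → Set (DirectSum K fun _ : K => M) := fun n => Nat.rec A0 (fun _ A => F A) n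
    with hseq
  have hseqS : ∀ n, seq (n+1) = F (seq n) := fun n => rfl
  have hseqmem : ∀ n, seq n ∈ 𝒦 := by
    intro n
    induction n with
    | zero => exact hA0
    | succ n ih => rw [hseqS n]; exact hF1 (seq n) ih
  have hssub : ∀ n, seq (n+1) ⊂ seq n := by
    intro n
    rw [hseqS n]
    exact ssubset_of_subset_of_ne (hF2 (seq n) (hseqmem n)) (hF3 (seq n) (hseqmem n))
  choose Sn hSn using fun n => hrep (seq n) (hseqmem n)
  by_cases hK : Nonempty K
  · obtain ⟨k0⟩ := hK
    apply chainStab hPC Sn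
    · intro n x hx
      have h1 : DirectSum.lof R K (fun _ => M) k0 x ∈ (Sn (n+1)).H (DirectSum K fun _ : K => M) :=
        Sys.H.map _ hx
      rw [← hSn (n+1)] at h1
      have h2 := (hssub n).1 h1
      rw [hSn n] at h2
      have h3 := Sys.H.map (DirectSum.component R K (fun _ => M) k0) h2
      simpa [DirectSum.lof_apply] using h3
    · intro n
      obtain ⟨v, hv1, hv2⟩ := Set.exists_of_ssubset (hssub n)
      rw [hSn n] at hv1
      have hnall : ¬ ∀ k, v k ∈ (Sn (n+1)).H M := by
        intro hall
        exact hv2 (by rw [hSn (n+1)]; exact Sys.H.dsum hall)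
      push_neg at hnall
      obtain ⟨k, hk⟩ := hnall
      exact ⟨v k, Sys.H.map (DirectSum.component R K (fun _ => M) k) hv1, hk⟩
  · -- K empty: the direct sum is trivial, so all members of 𝒦 are equal.
    have htriv : ∀ x : DirectSum K fun _ : K => M, x = 0 := by
      intro x
      apply DFinsupp.ext
      intro k
      exact absurd ⟨k⟩ hK
    have : seq 1 = seq 0 := by
      apply Set.eq_of_subset_of_subset (hssub 0).1
      intro x hx
      obtain ⟨S1, hS1⟩ := hrep (seq 1) (hseqmem 1)
      have h0 : (0 : DirectSum K fun _ : K => M) ∈ seq 1 := by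
        rw [hS1]; exact Sys.H.zero
      rwa [htriv x, ← htriv 0]
    exact (hssub 0).2 (this ▸ subset_rfl)

/-- A linear equation with variables `Λ` and constant in `D`. -/
structure LinEq (R : Type u) [Ring R] (Λ D : Type u) where
  ρ : Λ →₀ R
  b : D

def LinEq.Sat {Λ D : Type u} [AddCommGroup D] [Module R D] (ε : LinEq R Λ D) (x : Λ → D) :
    Prop := (ε.ρ.sum fun q r => r • x q) = ε.b

set_option maxHeartbeats 2000000 in
/-- Equational compactness: if the definable subgroups of `D` have minimal elements, then every
finitely solvable system of linear equations over `D` is solvable. -/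
theorem compactness {Λ D ι : Type u} [AddCommGroup D] [Module R D]
    (hWF : ∀ 𝒦 : Set (Set D), 𝒦.Nonempty → (∀ A ∈ 𝒦, ∃ S : Sys R, A = S.H D) →
      ∃ A ∈ 𝒦, ∀ B ∈ 𝒦, B ⊆ A → B = A)
    (eqn : ι → LinEq R Λ D)
    (hfin : ∀ Φ : Finset ι, ∃ x : Λ → D, ∀ i ∈ Φ, (eqn i).Sat x) :
    ∃ x : Λ → D, ∀ i, (eqn i).Sat x := by
  classical
  set V : Finset ι → Set Λ := fun Φ => {p | ∃ i ∈ Φ, p ∈ ((eqn i).ρ).support} with hV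
  have hVfin : ∀ Φ, (V Φ).Finite := by
    intro Φ
    have hsub : V Φ ⊆ ↑(Φ.biUnion fun i => ((eqn i).ρ).support) := by
      intro p hp
      obtain ⟨i, hi, hpi⟩ := hp
      simp only [Finset.coe_biUnion, Set.mem_iUnion, Finset.mem_coe]
      exact ⟨i, hi, hpi⟩
    exact Set.Finite.subset (Finset.finite_toSet _) hsub
  have hVmono : ∀ {Φ Φ' : Finset ι}, Φ ⊆ Φ' → V Φ ⊆ V Φ' := by
    intro Φ Φ' hsub p hp
    obtain ⟨i, hi, hpi⟩ := hp
    exact ⟨i, hsub hi, hpi⟩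
  set Cons : Set (Λ × D) → Prop := fun Sgr => ∀ Φ : Finset ι, ∃ x : Λ → D,
    (∀ i ∈ Φ, (eqn i).Sat x) ∧ ∀ pd ∈ Sgr, pd.1 ∈ V Φ → x pd.1 = pd.2 with hCons
  set Good : Set (Set (Λ × D)) :=
    {Sgr | (∀ p d d', (p, d) ∈ Sgr → (p, d') ∈ Sgr → d = d') ∧ Cons Sgr} with hGood
  have hempty : (∅ : Set (Λ × D)) ∈ Good := by
    constructor
    · intro p d d' h; exact absurd h (Set.notMem_empty _)
    · intro Φ
      obtain ⟨x, hx⟩ := hfin Φ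
      exact ⟨x, hx, fun pd hpd => absurd hpd (Set.notMem_empty _)⟩
  have hchain : ∀ c ⊆ Good, IsChain (· ⊆ ·) c → c.Nonempty →
      ∃ ub ∈ Good, ∀ s ∈ c, s ⊆ ub := by
    intro c hcG hchn hcne
    have htot : ∀ {s1 s2}, s1 ∈ c → s2 ∈ c → s1 ⊆ s2 ∨ s2 ⊆ s1 := by
      intro s1 s2 h1 h2
      by_cases he : s1 = s2
      · exact Or.inl (he ▸ subset_rfl)
      · exact hchn h1 h2 he
    have hfinmem : ∀ fs : Finset (Λ × D), ↑fs ⊆ ⋃₀ c → ∃ t ∈ c, ↑fs ⊆ t := by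
      intro fs
      induction fs using Finset.induction_on with
      | empty =>
          intro _
          obtain ⟨t, ht⟩ := hcne
          exact ⟨t, ht, by simp⟩
      | insert a s' hni ih =>
          intro hsub
          rw [Finset.coe_insert] at hsub
          obtain ⟨t', ht', hsub'⟩ := ih ((Set.subset_insert a ↑s').trans hsub)
          obtain ⟨ta, hta, haa⟩ := hsub (Set.mem_insert a ↑s')
          rw [Finset.coe_insert]
          rcases htot ht' hta with h | h
          · exact ⟨ta, hta, Set.insert_subset haa (hsub'.trans h)⟩
          · exact ⟨t', ht', Set.insert_subset (h haa) hsub'⟩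
    refine ⟨⋃₀ c, ⟨?_, ?_⟩, fun s hs => Set.subset_sUnion_of_mem hs⟩
    · intro p d d' hd hd'
      obtain ⟨s1, hs1, hd1⟩ := hd
      obtain ⟨s2, hs2, hd2⟩ := hd'
      rcases htot hs1 hs2 with h | h
      · exact (hcG hs2).1 p d d' (h hd1) hd2
      · exact (hcG hs1).1 p d d' hd1 (h hd2)
    · intro Φ
      set rel : Set (Λ × D) := {pd | pd ∈ ⋃₀ c ∧ pd.1 ∈ V Φ} with hrel
      have hrelfin : rel.Finite := by
        have himg : (Prod.fst '' rel).Finite :=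
          Set.Finite.subset (hVfin Φ) (by rintro p ⟨pd, hpd, rfl⟩; exact hpd.2)
        apply Set.Finite.of_finite_image himg
        intro pd hpd pd' hpd' heq
        have hfn : pd.2 = pd'.2 := by
          obtain ⟨s1, hs1, hd1⟩ := hpd.1
          obtain ⟨s2, hs2, hd2⟩ := hpd'.1
          have hd1' : (pd.1, pd.2) ∈ s1 := by simpa using hd1
          have hd2' : (pd.1, pd'.2) ∈ s2 := by rw [heq]; simpa using hd2
          rcases htot hs1 hs2 with h | h
          · exact (hcG hs2).1 pd.1 pd.2 pd'.2 (h hd1') hd2'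
          · exact (hcG hs1).1 pd.1 pd.2 pd'.2 hd1' (h hd2')
        exact Prod.ext heq hfn
      obtain ⟨t, htc, hrelt⟩ := hfinmem hrelfin.toFinset
        (by intro pd hpd; rw [hrelfin.coe_toFinset] at hpd; exact hpd.1)
      obtain ⟨x, hsat, hag⟩ := (hcG htc).2 Φ
      refine ⟨x, hsat, fun pd hpd hp1 => hag pd ?_ hp1⟩
      exact hrelt (by rw [hrelfin.coe_toFinset]; exact ⟨hpd, hp1⟩)
  obtain ⟨Smax, -, hSmaxmax⟩ := zorn_subset_nonempty Good hchain ∅ hempty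
  have hSmaxGood : Smax ∈ Good := hSmaxmax.1
  have hSmaxfun := hSmaxGood.1
  have hSmaxCons := hSmaxGood.2
  -- totality of the maximal consistent partial assignment
  have htotal : ∀ p : Λ, ∃ d, (p, d) ∈ Smax := by
    intro p₀
    by_contra hp₀
    push_neg at hp₀
    -- solution sets and their coset structure
    set Sols : Finset ι → Set (Λ → D) := fun Φ =>
      {x | (∀ i ∈ Φ, (eqn i).Sat x) ∧ ∀ pd ∈ Smax, pd.1 ∈ V Φ → x pd.1 = pd.2} with hSols
    have hSne : ∀ Φ, (Sols Φ).Nonempty := fun Φ => hSmaxCons Φ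
    have hSolsmono : ∀ {Φ Φ' : Finset ι}, Φ ⊆ Φ' → Sols Φ' ⊆ Sols Φ := by
      intro Φ Φ' hsub x hx
      exact ⟨fun i hi => hx.1 i (hsub hi), fun pd hpd hp => hx.2 pd hpd (hVmono hsub hp)⟩
    set SysOf : Finset ι → Sys R := fun Φ =>
      ⟨Λ, {ρ | ∃ i ∈ Φ, ρ = (eqn i).ρ} ∪
        {ρ | ∃ p, p ∈ V Φ ∧ (∃ d, (p, d) ∈ Smax) ∧ ρ = Finsupp.single p 1}, p₀⟩ with hSysOf
    have hHmono : ∀ {Φ Φ' : Finset ι}, Φ ⊆ Φ' → (SysOf Φ').H D ⊆ (SysOf Φ).H D := by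
      intro Φ Φ' hsub v hv
      obtain ⟨w, hw, hrows⟩ := hv
      refine ⟨w, hw, fun ρ hρ => hrows ρ ?_⟩
      rcases hρ with ⟨i, hi, hρ⟩ | ⟨p, hp1, hp2, hρ⟩
      · exact Or.inl ⟨i, hsub hi, hρ⟩
      · exact Or.inr ⟨p, hVmono hsub hp1, hp2, hρ⟩
    -- difference of two solutions is a solution of the homogeneous system
    have hcoset1 : ∀ Φ, ∀ x' ∈ Sols Φ, ∀ x'' ∈ Sols Φ, x'' p₀ - x' p₀ ∈ (SysOf Φ).H D := by
      intro Φ x' hx' x'' hx''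
      refine ⟨fun q => x'' q - x' q, rfl, fun ρ hρ => ?_⟩
      rcases hρ with ⟨i, hi, hρ⟩ | ⟨p, hp1, ⟨d, hd⟩, hρ⟩
      · subst hρ
        have h1 := hx'.1 i hi
        have h2 := hx''.1 i hi
        rw [LinEq.Sat] at h1 h2
        rw [Finsupp.sum] at h1 h2 ⊢
        simp only [smul_sub]
        rw [Finset.sum_sub_distrib, h1, h2, sub_self]
      · subst hρ
        rw [Finsupp.sum_single_index (by simp)]
        have e1 : x'' p = d := hx''.2 (p, d) hd hp1
        have e2 : x' p = d := hx'.2 (p, d) hd hp1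
        show (1 : R) • (x'' p - x' p) = 0
        rw [one_smul, e1, e2, sub_self]
    -- a homogeneous solution shifts a solution
    have hcoset2 : ∀ Φ, ∀ x' ∈ Sols Φ, ∀ v : D, v - x' p₀ ∈ (SysOf Φ).H D →
        ∃ x'' ∈ Sols Φ, x'' p₀ = v := by
      intro Φ x' hx' v hv
      obtain ⟨w, hw, hrows⟩ := hv
      have hwp : w p₀ = v - x' p₀ := hw
      refine ⟨fun q => x' q + w q, ⟨?_, ?_⟩, by show x' p₀ + w p₀ = v; rw [hwp]; abel⟩
      · intro i hi
        have h1 := hx'.1 i hi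
        have h2 := hrows (eqn i).ρ (Or.inl ⟨i, hi, rfl⟩)
        rw [LinEq.Sat] at h1 ⊢
        rw [Finsupp.sum] at h1 h2 ⊢
        simp only [smul_add]
        rw [Finset.sum_add_distrib, h1, h2, add_zero]
      · intro pd hpd hp
        have h2 := hrows (Finsupp.single pd.1 1) (Or.inr ⟨pd.1, hp, ⟨pd.2, by simpa using hpd⟩, rfl⟩)
        rw [Finsupp.sum_single_index (by simp), one_smul] at h2
        show x' pd.1 + w pd.1 = pd.2
        rw [h2, add_zero]
        exact hx'.2 pd hpd hp
    -- minimal definable subgroup among the homogeneous solution projections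
    obtain ⟨Amin, ⟨Φmin, hΦmin⟩, hAmin⟩ := hWF {A | ∃ Φ : Finset ι, A = (SysOf Φ).H D}
      ⟨(SysOf ∅).H D, ∅, rfl⟩ (by rintro A ⟨Φ, rfl⟩; exact ⟨SysOf Φ, rfl⟩)
    obtain ⟨xmin, hxmin⟩ := hSne Φmin
    -- the value `xmin p₀` is admissible for every finite subsystem
    have hkey : ∀ Φ : Finset ι, ∃ x ∈ Sols Φ, x p₀ = xmin p₀ := by
      intro Φ
      set Φ' := Φ ∪ Φmin with hΦ'
      obtain ⟨x', hx'⟩ := hSne Φ'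
      have hx'min : x' ∈ Sols Φmin := hSolsmono Finset.subset_union_right hx'
      have hHsub : (SysOf Φ').H D ⊆ (SysOf Φmin).H D := hHmono Finset.subset_union_right
      have hHeq : (SysOf Φ').H D = (SysOf Φmin).H D := by
        have := hAmin ((SysOf Φ').H D) ⟨Φ', rfl⟩ (hΦmin ▸ hHsub)
        rw [this, hΦmin]
      have hd1 : x' p₀ - xmin p₀ ∈ (SysOf Φmin).H D := hcoset1 Φmin xmin hxmin x' hx'min
      have hd2 : xmin p₀ - x' p₀ ∈ (SysOf Φ').H D := by
        rw [hHeq]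
        have := hcoset1 Φmin x' hx'min xmin hxmin
        exact this
      obtain ⟨x'', hx'', hx''p⟩ := hcoset2 Φ' x' hx' (xmin p₀) hd2
      exact ⟨x'', hSolsmono Finset.subset_union_left hx'', hx''p⟩
    -- extend the maximal assignment, contradiction
    have hnew : insert (p₀, xmin p₀) Smax ∈ Good := by
      constructor
      · intro p d d' hd hd'
        rcases hd with hd | hd <;> rcases hd' with hd' | hd'
        · obtain ⟨h1, h2⟩ := Prod.ext_iff.1 hd
          obtain ⟨h3, h4⟩ := Prod.ext_iff.1 hd'
          simp only at h2 h4
          rw [h2, h4]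
        · obtain ⟨h1, h2⟩ := Prod.ext_iff.1 hd
          simp only at h1
          subst h1
          exact absurd hd' (hp₀ d')
        · obtain ⟨h1, h2⟩ := Prod.ext_iff.1 hd'
          simp only at h1
          subst h1
          exact absurd hd (hp₀ d)
        · exact hSmaxfun p d d' hd hd'
      · intro Φ
        obtain ⟨x, hx, hxp⟩ := hkey Φ
        refine ⟨x, hx.1, ?_⟩
        intro pd hpd hp
        rcases hpd with hpd | hpd
        · rw [hpd]
          exact hxp
        · exact hx.2 pd hpd hp
    have hsub : Smax ⊆ insert (p₀, xmin p₀) Smax := Set.subset_insert _ _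
    have := hSmaxmax.2 hnew hsub
    have hmem : (p₀, xmin p₀) ∈ Smax := this (Set.mem_insert _ _)
    exact hp₀ (xmin p₀) hmem
  -- conclusion: the total assignment solves everything
  choose xf hxf using htotal
  refine ⟨xf, fun i => ?_⟩
  obtain ⟨x, hsat, hag⟩ := hSmaxCons {i}
  have hagr : ∀ p ∈ ((eqn i).ρ).support, x p = xf p := by
    intro p hp
    exact hag (p, xf p) (hxf p) ⟨i, Finset.mem_singleton_self i, hp⟩
  have := hsat i (Finset.mem_singleton_self i)
  rw [LinEq.Sat] at this ⊢
  rw [Finsupp.sum] at this ⊢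
  rw [← this]
  apply Finset.sum_congr rfl
  intro p hp
  rw [hagr p hp]

/-- Expansion helpers for `Finsupp.sum` over small combinations. -/
theorem expand3 {Λ D : Type u} [AddCommGroup D] [Module R D] (y : Λ → D) (a b c : Λ) :
    ((Finsupp.single a (1:R) - Finsupp.single b 1 - Finsupp.single c 1).sum
      fun q r => r • y q) = y a - y b - y c := by
  rw [Finsupp.sum_sub_index (fun q b₁ b₂ => sub_smul b₁ b₂ (y q)),
    Finsupp.sum_sub_index (fun q b₁ b₂ => sub_smul b₁ b₂ (y q)),
    Finsupp.sum_single_index (by simp), Finsupp.sum_single_index (by simp),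
    Finsupp.sum_single_index (by simp), one_smul, one_smul, one_smul]

theorem expand2 {Λ D : Type u} [AddCommGroup D] [Module R D] (y : Λ → D) (a b : Λ) (c : R) :
    ((Finsupp.single a (1:R) - Finsupp.single b c).sum fun q r => r • y q)
      = y a - c • y b := by
  rw [Finsupp.sum_sub_index (fun q b₁ b₂ => sub_smul b₁ b₂ (y q)),
    Finsupp.sum_single_index (by simp), Finsupp.sum_single_index (by simp), one_smul]

theorem expand1 {Λ D : Type u} [AddCommGroup D] [Module R D] (y : Λ → D) (a : Λ) :
    ((Finsupp.single a (1:R)).sum fun q r => r • y q) = y a := by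
  rw [Finsupp.sum_single_index (by simp), one_smul]

set_option maxHeartbeats 1000000 in
/-- The canonical inclusion of a direct sum of copies of `M` into the corresponding power
splits, provided every power of `M` lies in `Add M`. -/
theorem retraction
    (hPC : ∀ I : Type u, ∃ (J : Type u) (e : (I → M) →ₗ[R] DirectSum J fun _ : J => M)
      (r : (DirectSum J fun _ : J => M) →ₗ[R] (I → M)), r.comp e = LinearMap.id)
    (K : Type u) :
    ∃ ρ : (K → M) →ₗ[R] DirectSum K fun _ : K => M,
      ∀ d : DirectSum K fun _ : K => M, ρ (fun k => d k) = d := by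
  classical
  set D := DirectSum K fun _ : K => M with hD
  set Λ : Type u := K → M with hΛ
  -- the system of equations expressing that the assignment is linear and restricts to the
  -- identity on the direct sum
  set eqn : (Λ × Λ) ⊕ (R × Λ) ⊕ D → LinEq R Λ D := fun i =>
    match i with
    | Sum.inl (p, p') => ⟨Finsupp.single (p + p') 1 - Finsupp.single p 1
        - Finsupp.single p' 1, 0⟩
    | Sum.inr (Sum.inl (c, p)) => ⟨Finsupp.single (c • p) 1 - Finsupp.single p c, 0⟩
    | Sum.inr (Sum.inr d) => ⟨Finsupp.single (fun k => d k : Λ) 1, d⟩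
    with heqn
  have hfin : ∀ Φ : Finset ((Λ × Λ) ⊕ (R × Λ) ⊕ D), ∃ x : Λ → D, ∀ i ∈ Φ, (eqn i).Sat x := by
    intro Φ
    set F : Finset K := Φ.biUnion (fun i =>
      match i with
      | Sum.inr (Sum.inr d) => d.support
      | _ => ∅) with hF
    refine ⟨fun p => ∑ k ∈ F, DirectSum.lof R K (fun _ => M) k (p k), ?_⟩
    rintro (⟨p, p'⟩ | ⟨c, p⟩ | d) hi
    · have hgoal : ((Finsupp.single (p + p') (1:R) - Finsupp.single p 1
          - Finsupp.single p' 1).sum fun q r =>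
            r • ∑ k ∈ F, DirectSum.lof R K (fun _ => M) k (q k)) = 0 := by
        rw [expand3]
        have hterm : ∀ k ∈ F, DirectSum.lof R K (fun _ => M) k ((p + p') k)
            = DirectSum.lof R K (fun _ => M) k (p k) + DirectSum.lof R K (fun _ => M) k (p' k) := by
          intro k _
          rw [Pi.add_apply, map_add]
        rw [Finset.sum_congr rfl hterm, Finset.sum_add_distrib]
        abel
      exact hgoal
    · have hgoal : ((Finsupp.single (c • p) (1:R) - Finsupp.single p c).sum fun q r =>
          r • ∑ k ∈ F, DirectSum.lof R K (fun _ => M) k (q k)) = 0 := by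
        rw [expand2]
        beta_reduce
        rw [sub_eq_zero, Finset.smul_sum]
        apply Finset.sum_congr rfl
        intro k _
        rw [Pi.smul_apply, map_smul]
      exact hgoal
    · have hsupp : d.support ⊆ F := by
        intro k hk
        rw [hF]
        apply Finset.mem_biUnion.2
        exact ⟨Sum.inr (Sum.inr d), hi, hk⟩
      have hgoal : ((Finsupp.single (fun k => d k : Λ) (1:R)).sum fun q r =>
          r • ∑ k ∈ F, DirectSum.lof R K (fun _ => M) k (q k)) = d := by
        rw [expand1]
        beta_reduce
        have hz : ∀ k ∈ F, k ∉ d.support → DirectSum.lof R K (fun _ => M) k (d k) = 0 := by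
          intro k _ hk
          rw [DFinsupp.notMem_support_iff.1 hk, map_zero]
        rw [← Finset.sum_subset hsupp hz]
        simp only [DirectSum.lof_eq_of]
        exact DirectSum.sum_support_of d
      exact hgoal
  obtain ⟨x₀, hx₀⟩ := compactness (minDsum hPC K) eqn hfin
  have hadd : ∀ p p' : Λ, x₀ (p + p') = x₀ p + x₀ p' := by
    intro p p'
    have h : ((Finsupp.single (p + p') (1:R) - Finsupp.single p 1
        - Finsupp.single p' 1).sum fun q r => r • x₀ q) = 0 := hx₀ (Sum.inl (p, p'))
    rw [expand3, sub_sub, sub_eq_zero] at h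
    exact h
  have hsmul : ∀ (c : R) (p : Λ), x₀ (c • p) = c • x₀ p := by
    intro c p
    have h : ((Finsupp.single (c • p) (1:R) - Finsupp.single p c).sum
        fun q r => r • x₀ q) = 0 := hx₀ (Sum.inr (Sum.inl (c, p)))
    rw [expand2, sub_eq_zero] at h
    exact h
  have hid : ∀ d : D, x₀ (fun k => d k) = d := by
    intro d
    have h : ((Finsupp.single (fun k => d k : Λ) (1:R)).sum fun q r => r • x₀ q) = d :=
      hx₀ (Sum.inr (Sum.inr d))
    rw [expand1] at h
    exact h
  exact ⟨{ toFun := x₀, map_add' := hadd, map_smul' := hsmul }, hid⟩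

end PCaux

set_option maxHeartbeats 1000000 in
/-- `M` is product-complete (`Prod(M) ⊆ Add(M)`) iff `Add(M)` is a preenveloping class. -/
theorem productComplete_iff_add_preenveloping
    (M : Type u) [AddCommGroup M] [Module R M] :
    (∀ (X : Type u) (_ : AddCommGroup X) (_ : Module R X), MemProd R M X → MemAdd R M X) ↔
      IsPreenvelopingClass R (fun N _ _ => MemAdd R M N) := by
  classical
  constructor
  · intro hLHS N instN instMN
    letI := instN
    letI := instMN
    have hPC : ∀ I : Type u, ∃ (J : Type u) (e : (I → M) →ₗ[R] DirectSum J fun _ : J => M)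
        (r : (DirectSum J fun _ : J => M) →ₗ[R] (I → M)), r.comp e = LinearMap.id := by
      intro I
      exact hLHS (I → M) inferInstance inferInstance ⟨I, LinearMap.id, LinearMap.id, rfl⟩
    set K := N × ℕ with hK
    obtain ⟨ρ, hρ⟩ := PCaux.retraction hPC K
    set D := DirectSum K fun _ : K => M with hD
    set T := N →ₗ[R] D with hT
    set C := T → D with hC
    set g : N →ₗ[R] C := LinearMap.pi (fun t : T => t) with hg
    have hCprod : MemProd R M C := by
      refine ⟨K × T,
        LinearMap.pi (fun kt : K × T => (DirectSum.component R K (fun _ => M) kt.1).comp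
          (LinearMap.proj kt.2)),
        LinearMap.pi (fun t : T => ρ.comp (LinearMap.funLeft R M fun k : K => (k, t))), ?_⟩
      apply LinearMap.ext
      intro f
      funext t
      show ρ (fun k => (f t) k) = f t
      exact hρ (f t)
    have hCadd : MemAdd R M C := hLHS C inferInstance inferInstance hCprod
    refine ⟨C, inferInstance, inferInstance, g, hCadd, ?_⟩
    intro C' instC' instMC' g' hC'
    letI := instC'
    letI := instMC'
    obtain ⟨J', i, p, hpi⟩ := hC'
    set f₁ : N →ₗ[R] DirectSum J' (fun _ : J' => M) := i.comp g' with hf₁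
    set P0 : J' → Prop := fun j => ∃ n : N, f₁ n j ≠ 0 with hP0
    set u : {j : J' // P0 j} → K := fun j =>
      (j.2.choose, ((f₁ j.2.choose).support.toList.idxOf j.1)) with hu
    have huinj : Function.Injective u := by
      rintro ⟨j, hj⟩ ⟨j', hj'⟩ heq
      obtain ⟨h1, h2⟩ := Prod.ext_iff.1 heq
      simp only [hu] at h1 h2
      have hm1 : j ∈ (f₁ hj.choose).support := DFinsupp.mem_support_iff.2 hj.choose_spec
      have hm2 : j' ∈ (f₁ hj.choose).support := by
        rw [h1]; exact DFinsupp.mem_support_iff.2 hj'.choose_spec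
      rw [← h1] at h2
      exact Subtype.ext ((List.idxOf_inj (Finset.mem_toList.2 hm1)).1 h2)
    set a' : DirectSum J' (fun _ : J' => M) →ₗ[R] D := DirectSum.toModule R J' D
      (fun j => if h : P0 j then DirectSum.lof R K (fun _ => M) (u ⟨j, h⟩) else 0) with ha'
    set b' : D →ₗ[R] DirectSum J' (fun _ : J' => M) := DirectSum.toModule R K _
      (fun k => if h : ∃ j0 : {j : J' // P0 j}, u j0 = k
        then DirectSum.lof R J' (fun _ : J' => M) h.choose.1 else 0) with hb'
    have hba : ∀ x : DirectSum J' (fun _ : J' => M),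
        (∀ j, ¬ P0 j → x j = 0) → b' (a' x) = x := by
      intro x
      induction x using DFinsupp.induction with
      | h0 => intro _; rw [map_zero, map_zero]
      | ha j bj f hfj hbj ih =>
          intro hcond
          have hj : P0 j := by
            by_contra hcon
            have h0 := hcond j hcon
            rw [DFinsupp.add_apply, DFinsupp.single_eq_same, hfj, add_zero] at h0
            exact hbj h0
          have hf : ∀ j', ¬ P0 j' → f j' = 0 := by
            intro j' hcon
            have h0 := hcond j' hcon
            by_cases hjj : j' = j
            · subst hjj; exact hfj
            · rw [DFinsupp.add_apply, DFinsupp.single_eq_of_ne hjj, zero_add] at h0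
              exact h0
          rw [map_add, map_add, ih hf]
          congr 1
          have hsingle : (DFinsupp.single j bj : DirectSum J' fun _ : J' => M)
              = DirectSum.of (fun _ : J' => M) j bj := rfl
          rw [hsingle]
          have e1 : a' ((DirectSum.of (fun _ : J' => M) j) bj)
              = DirectSum.lof R K (fun _ => M) (u ⟨j, hj⟩) bj := by
            rw [← DirectSum.lof_eq_of R, ha', DirectSum.toModule_lof, dif_pos hj]
          have hex : ∃ j0 : {jj : J' // P0 jj}, u j0 = u ⟨j, hj⟩ := ⟨⟨j, hj⟩, rfl⟩
          have e2 : b' (DirectSum.lof R K (fun _ => M) (u ⟨j, hj⟩) bj)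
              = (DirectSum.of (fun _ : J' => M) j) bj := by
            rw [hb', DirectSum.toModule_lof, dif_pos hex]
            have hch : hex.choose = ⟨j, hj⟩ := huinj hex.choose_spec
            rw [hch, DirectSum.lof_eq_of]
          rw [e1, e2]
    have hsupp1 : ∀ (n : N) (j : J'), ¬ P0 j → f₁ n j = 0 := by
      intro n j h
      by_contra hne
      exact h ⟨n, hne⟩
    refine ⟨p.comp (b'.comp (LinearMap.proj (a'.comp f₁))), ?_⟩
    apply LinearMap.ext
    intro n
    show p (b' ((g n) (a'.comp f₁))) = g' n
    have h1 : (g n) (a'.comp f₁) = a' (f₁ n) := rfl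
    rw [h1, hba (f₁ n) (fun j hj => hsupp1 n j hj)]
    show p (i (g' n)) = g' n
    have h2 := DFunLike.congr_fun hpi (g' n)
    simpa using h2
  · intro hPre X instX instMX hX
    letI := instX
    letI := instMX
    obtain ⟨I, i, p, hpi⟩ := hX
    obtain ⟨C, instC, instMC, g, hCmem, hfact⟩ := hPre (I → M) inferInstance inferInstance
    letI := instC
    letI := instMC
    have memAddM : MemAdd R M M := by
      refine ⟨PUnit, DirectSum.lof R PUnit (fun _ => M) PUnit.unit,
        DirectSum.toModule R PUnit M (fun _ => LinearMap.id), ?_⟩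
      apply LinearMap.ext
      intro x
      simp [DirectSum.toModule_lof]
    choose hfun hhfun using fun i₀ : I =>
      hfact M inferInstance inferInstance (LinearMap.proj i₀) memAddM
    have hdg : ∀ x : I → M, (LinearMap.pi hfun) (g x) = x := by
      intro x
      funext i₀
      have h := DFunLike.congr_fun (hhfun i₀) x
      simpa using h
    obtain ⟨Jc, ic, pc, hpc⟩ := hCmem
    refine ⟨Jc, ic.comp (g.comp i), (p.comp (LinearMap.pi hfun)).comp pc, ?_⟩
    apply LinearMap.ext
    intro x
    simp only [LinearMap.comp_apply, LinearMap.id_apply]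
    have h1 := DFunLike.congr_fun hpc (g (i x))
    simp only [LinearMap.comp_apply, LinearMap.id_apply] at h1
    rw [h1, hdg]
    have h2 := DFunLike.congr_fun hpi x
    simpa using h2
end

section
/- Let R be a ring, 𝒞 a class of R-modules closed under finite direct sums and direct summands, and f : C → A a 𝒞-precover of A. Suppose (i) idempotents of End(C) lift modulo the Jacobson radical J(End(C)), and (ii) for the right ideal I = { g ∈ End(C) : f ∘ g = 0 } there exists a right ideal J with I + J = End(C) and I ∩ J ⊆ J(End(C)). Then A has a 𝒞-cover. -/
universe u

open DirectSum

variable {R : Type u} [Ring R]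

theorem jac_mul_right' {S : Type*} [Ring S] {x : S} (hx : x ∈ (⊥ : Ideal S).jacobson)
    (y : S) : x * y ∈ (⊥ : Ideal S).jacobson :=
  Ideal.mul_mem_right y _ hx

theorem isUnit_one_sub_of_mem_jac' {S : Type*} [Ring S] {x : S}
    (hx : x ∈ (⊥ : Ideal S).jacobson) : IsUnit (1 - x) := by
  have key : ∀ y : S, y ∈ (⊥ : Ideal S).jacobson → ∃ z : S, z * (1 - y) = 1 := by
    intro y hy
    obtain ⟨z, hz⟩ := Ideal.mem_jacobson_iff.1 hy (-1)
    rw [Ideal.mem_bot, mul_neg_one, neg_mul] at hz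
    refine ⟨z, ?_⟩
    rw [mul_sub, mul_one]
    exact sub_eq_zero.mp (by rw [← hz]; abel)
  obtain ⟨z, hz⟩ := key x hx
  have hz1 : z - z * x = 1 := by rw [← hz, mul_sub, mul_one]
  have hzx : -(z * x) ∈ (⊥ : Ideal S).jacobson := neg_mem (Ideal.mul_mem_left _ z hx)
  obtain ⟨w, hw⟩ := key _ hzx
  have hwz : w * z = 1 := by
    have h2 : 1 - -(z * x) = z := by rw [sub_neg_eq_add, ← hz1]; abel
    rwa [h2] at hw
  have hw' : w = 1 - x := by
    calc w = w * (z * (1 - x)) := by rw [hz, mul_one]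
    _ = (w * z) * (1 - x) := by rw [mul_assoc]
    _ = 1 - x := by rw [hwz, one_mul]
  exact ⟨⟨1 - x, z, by rw [← hw', hwz], hz⟩, rfl⟩

/-- If `𝒞` is closed under finite direct sums and direct summands, `f : C → A` is a
`𝒞`-precover, idempotents of `End(C)` lift modulo the Jacobson radical, and the right ideal
`I = {g : f ∘ g = 0}` has a complement `J` up to the radical (`I + J = End(C)` and
`I ∩ J ⊆ J(End C)`), then `A` has a `𝒞`-cover. -/
theorem cover_of_precover_semiregular
    (𝒞 : (N : Type u) → [AddCommGroup N] → [Module R N] → Prop)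
    (hsum : ∀ (X Y : Type u) (_ : AddCommGroup X) (_ : AddCommGroup Y)
      (_ : Module R X) (_ : Module R Y), 𝒞 X → 𝒞 Y → 𝒞 (X × Y))
    (hsummand : ∀ (X Y : Type u) (_ : AddCommGroup X) (_ : AddCommGroup Y)
      (_ : Module R X) (_ : Module R Y), 𝒞 Y → IsDirectSummandOf R X Y → 𝒞 X)
    (A C : Type u) [AddCommGroup A] [Module R A] [AddCommGroup C] [Module R C]
    (f : C →ₗ[R] A) (hC : 𝒞 C)
    (hprecover : ∀ (C' : Type u) (_ : AddCommGroup C') (_ : Module R C') (g : C' →ₗ[R] A),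
      𝒞 C' → ∃ h : C' →ₗ[R] C, f.comp h = g)
    (hidem : ∀ g : Module.End R C, g * g - g ∈ (⊥ : Ideal (Module.End R C)).jacobson →
      ∃ e : Module.End R C, IsIdempotentElem e ∧ e - g ∈ (⊥ : Ideal (Module.End R C)).jacobson)
    (J : AddSubgroup (Module.End R C))
    (hJright : ∀ a ∈ J, ∀ r : Module.End R C, a * r ∈ J)
    (hIJ_top : ∀ g : Module.End R C, ∃ a b : Module.End R C,
      f.comp a = 0 ∧ b ∈ J ∧ g = a + b)
    (hIJ_rad : ∀ g : Module.End R C, f.comp g = 0 → g ∈ J →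
      g ∈ (⊥ : Ideal (Module.End R C)).jacobson) :
    ∃ (D : Type u) (_ : AddCommGroup D) (_ : Module R D) (f' : D →ₗ[R] A), 𝒞 D ∧
      (∀ (C' : Type u) (_ : AddCommGroup C') (_ : Module R C') (g : C' →ₗ[R] A),
        𝒞 C' → ∃ h : C' →ₗ[R] D, f'.comp h = g) ∧
      ∀ h : D →ₗ[R] D, f'.comp h = f' → Function.Bijective h := by
  classical
  set Jac := (⊥ : Ideal (Module.End R C)).jacobson with hJacdef
  have hImul : ∀ (x y : Module.End R C), f.comp x = 0 → f.comp (x * y) = 0 := by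
    intro x y hx
    rw [Module.End.mul_eq_comp, ← LinearMap.comp_assoc, hx, LinearMap.zero_comp]
  obtain ⟨a, b, hfa, hbJ, hab⟩ := hIJ_top 1
  have hba : b = 1 - a := by rw [hab]; abel
  have hbb_I : f.comp (b * b - b) = 0 := by
    have h1 : b * b - b = a * a - a := by rw [hba]; noncomm_ring
    rw [h1, LinearMap.comp_sub, hImul a a hfa, hfa, sub_zero]
  have hbbJac : b * b - b ∈ Jac := hIJ_rad _ hbb_I (J.sub_mem (hJright b hbJ b) hbJ)
  obtain ⟨g, hg, hgb⟩ := hidem b hbbJac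
  set ε₀ : Module.End R C := 1 - g with hε₀def
  have hε₀idem : ε₀ * ε₀ = ε₀ := by
    rw [hε₀def, sub_mul, one_mul, mul_sub, mul_one, hg.eq]; abel
  have hε₀a : ε₀ - a ∈ Jac := by
    have h1 : ε₀ - a = -(g - b) := by rw [hε₀def, hba]; abel
    rw [h1]; exact neg_mem hgb
  set x : Module.End R C := a * ε₀ with hxdef
  have hxI : f.comp x = 0 := hImul a ε₀ hfa
  have hxε : ε₀ - x ∈ Jac := by
    have h1 : ε₀ - x = (ε₀ - a) * ε₀ := by
      rw [hxdef, sub_mul ε₀ a ε₀, hε₀idem]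
    rw [h1]; exact jac_mul_right' hε₀a ε₀
  have hxε₀ : x * ε₀ = x := by rw [hxdef, mul_assoc, hε₀idem]
  obtain ⟨U, hU⟩ := isUnit_one_sub_of_mem_jac' hxε
  have hu1 : (U : Module.End R C) - 1 ∈ Jac := by
    have h1 : (U : Module.End R C) - 1 = -(ε₀ - x) := by rw [hU]; abel
    rw [h1]; exact neg_mem hxε
  have hone_u : (1 : Module.End R C) - U ∈ Jac := by
    have h1 : (1 : Module.End R C) - U = -((U : Module.End R C) - 1) := by abel
    rw [h1]; exact neg_mem hu1
  have hUinv1 : ((U⁻¹ : (Module.End R C)ˣ) : Module.End R C) - 1 ∈ Jac := by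
    have h1 : ((U⁻¹ : (Module.End R C)ˣ) : Module.End R C) - 1
        = (U⁻¹ : (Module.End R C)ˣ) * ((1 : Module.End R C) - U) := by
      rw [mul_sub, mul_one, U.inv_mul]
    rw [h1]; exact Ideal.mul_mem_left _ _ hone_u
  set ε : Module.End R C := (U : Module.End R C) * ε₀ * (U⁻¹ : (Module.End R C)ˣ)
    with hεdef
  have hUε₀ : (U : Module.End R C) * ε₀ = x := by
    rw [hU, sub_mul, one_mul, sub_mul, hε₀idem, hxε₀]; abel
  have hεidem : ε * ε = ε := by
    rw [hεdef]
    calc (U : Module.End R C) * ε₀ * (U⁻¹ : (Module.End R C)ˣ)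
        * ((U : Module.End R C) * ε₀ * (U⁻¹ : (Module.End R C)ˣ))
        = (U : Module.End R C) * ε₀ * (((U⁻¹ : (Module.End R C)ˣ)
          * (U : Module.End R C)) * ε₀) * (U⁻¹ : (Module.End R C)ˣ) := by
          noncomm_ring
      _ = (U : Module.End R C) * ε₀ * (U⁻¹ : (Module.End R C)ˣ) := by
          rw [U.inv_mul, one_mul, mul_assoc ((U : Module.End R C)) ε₀ ε₀, hε₀idem]
  have hεI : f.comp ε = 0 := by
    rw [hεdef, hUε₀]; exact hImul x _ hxI
  have hεε₀ : ε - ε₀ ∈ Jac := by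
    have h1 : ε - ε₀ = (U : Module.End R C) * ε₀
        * (((U⁻¹ : (Module.End R C)ˣ) : Module.End R C) - 1)
        + ((U : Module.End R C) - 1) * ε₀ := by
      rw [hεdef]; noncomm_ring
    rw [h1]
    exact add_mem (Ideal.mul_mem_left _ _ hUinv1) (jac_mul_right' hu1 ε₀)
  have hεa : ε - a ∈ Jac := by
    have h1 : ε - a = (ε - ε₀) + (ε₀ - a) := by abel
    rw [h1]; exact add_mem hεε₀ hε₀a
  set e : Module.End R C := 1 - ε with hedef
  have he_idem : e * e = e := by
    rw [hedef, sub_mul, one_mul, mul_sub, mul_one, hεidem]; abel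
  have heb : e - b ∈ Jac := by
    have h1 : e - b = -(ε - a) := by rw [hedef, hba]; abel
    rw [h1]; exact neg_mem hεa
  have hfe : f.comp e = f := by
    rw [hedef, LinearMap.comp_sub, hεI, sub_zero, Module.End.one_eq_id,
      LinearMap.comp_id]
  have hcorner : ∀ y : Module.End R C, f.comp y = 0 → e * y * e ∈ Jac := by
    intro y hy
    have h1 : f.comp (b * (y * b)) = 0 := by
      have hexp : b * (y * b) = y * b - a * (y * b) := by rw [hba]; noncomm_ring
      rw [hexp, LinearMap.comp_sub, hImul y b hy, hImul a _ hfa, sub_zero]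
    have h3 : b * (y * b) ∈ Jac := hIJ_rad _ h1 (hJright b hbJ (y * b))
    have h4 : e * y * e - b * (y * b) = (e - b) * (y * e) + b * (y * (e - b)) := by
      noncomm_ring
    have h5 : e * y * e - b * (y * b) ∈ Jac := by
      rw [h4]
      exact add_mem (jac_mul_right' heb (y * e))
        (Ideal.mul_mem_left _ _ (Ideal.mul_mem_left _ _ heb))
    have h6 : e * y * e = (e * y * e - b * (y * b)) + b * (y * b) := by abel
    rw [h6]; exact add_mem h5 h3
  -- the module D = range e
  have heZ : ∀ z : C, z ∈ LinearMap.range e → e z = z := by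
    rintro z ⟨w, rfl⟩
    have := DFunLike.congr_fun he_idem w
    simpa [Module.End.mul_apply] using this
  refine ⟨↥(LinearMap.range e), inferInstance, inferInstance,
    f.comp (LinearMap.range e).subtype, ?_, ?_, ?_⟩
  · refine hsummand _ C _ _ _ _ hC
      ⟨(LinearMap.range e).subtype,
       LinearMap.codRestrict (LinearMap.range e) e (fun c => LinearMap.mem_range_self e c),
       ?_⟩
    ext d
    exact heZ _ d.2
  · intro C' _ _ g hg'
    obtain ⟨h, hh⟩ := hprecover C' _ _ g hg'
    refine ⟨(LinearMap.codRestrict (LinearMap.range e) e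
      (fun c => LinearMap.mem_range_self e c)).comp h, ?_⟩
    have : (f.comp (LinearMap.range e).subtype).comp
        ((LinearMap.codRestrict (LinearMap.range e) e
          (fun c => LinearMap.mem_range_self e c)).comp h) = (f.comp e).comp h := by
      rfl
    rw [this, hfe, hh]
  · intro h hh
    set i : ↥(LinearMap.range e) →ₗ[R] C := (LinearMap.range e).subtype with hidef
    set p : C →ₗ[R] ↥(LinearMap.range e) :=
      LinearMap.codRestrict (LinearMap.range e) e
        (fun c => LinearMap.mem_range_self e c) with hpdef
    set t : Module.End R C := i.comp (h.comp p) with htdef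
    have hpi : ∀ d : ↥(LinearMap.range e), p (d : C) = d := by
      intro d; exact Subtype.ext (heZ _ d.2)
    have htc : ∀ c : C, t c = ((h (p c) : C)) := fun c => rfl
    have hft : f.comp t = f := by
      have h1 : f.comp t = ((f.comp i).comp h).comp p := by
        rw [htdef]; rfl
      rw [h1, hh]
      have h2 : (f.comp i).comp p = f.comp e := rfl
      rw [h2, hfe]
    have het : e * t = t := by
      refine LinearMap.ext fun c => ?_
      rw [Module.End.mul_apply, htc]
      exact heZ _ (h (p c)).2
    have hte : t * e = t := by
      refine LinearMap.ext fun c => ?_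
      rw [Module.End.mul_apply, htc, htc]
      congr 1
      exact congrArg h (Subtype.ext (by
        show e (e c) = e c
        exact heZ _ (LinearMap.mem_range_self e c)))
    have hetJac : e - t ∈ Jac := by
      have h0 : f.comp (e - t) = 0 := by rw [LinearMap.comp_sub, hfe, hft, sub_self]
      have h1 := hcorner (e - t) h0
      have h2 : e * (e - t) * e = e - t := by
        calc e * (e - t) * e = (e * e - e * t) * e := by rw [mul_sub e e t]
          _ = (e - t) * e := by rw [he_idem, het]
          _ = e * e - t * e := by rw [sub_mul e t e]
          _ = e - t := by rw [he_idem, hte]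
      rwa [h2] at h1
    obtain ⟨V, hV⟩ := isUnit_one_sub_of_mem_jac' hetJac
    set s : Module.End R C := 1 - (e - t) with hsdef
    have hsbij : Function.Bijective s := by
      have : IsUnit s := ⟨V, hV⟩
      exact Module.End.isUnit_iff s |>.mp this
    have hsi : ∀ d : ↥(LinearMap.range e), s (i d) = i (h d) := by
      intro d
      show (d : C) - (e (d : C) - t (d : C)) = ((h d : C))
      rw [heZ _ d.2, htc, hpi d]
      abel
    have hes : ∀ z : C, e (s z) = t z := by
      intro z
      have h1 : e * s = t := by
        rw [hsdef, mul_sub, mul_one, mul_sub, he_idem, het]; abel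
      calc e (s z) = (e * s) z := rfl
        _ = t z := by rw [h1]
    constructor
    · intro d₁ d₂ hd
      have h1 : s (i d₁) = s (i d₂) := by rw [hsi, hsi, hd]
      have h2 : i d₁ = i d₂ := hsbij.1 h1
      exact Subtype.ext h2
    · intro d
      obtain ⟨c, hc⟩ := hsbij.2 (i d)
      refine ⟨p c, Subtype.ext ?_⟩
      have h1 : (↑(h (p c)) : C) = t c := (htc c).symm
      rw [h1, ← hes c, hc]
      exact heZ _ d.2
end

section
/- Let R be a ring and M an R-module. If Prod(M) ⊆ Add(M), then M is Σ-pure-injective. -/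
universe u

open DirectSum

section TraceAPI

variable (R : Type u) [Ring R]

/-- The trace subgroup of a pointed module `(X, ξ)` in `N`: the set of images of `ξ` under
all `R`-linear maps `X →ₗ[R] N`. -/
def ptTrace (X : Type u) [AddCommGroup X] [Module R X] (ξ : X)
    (N : Type u) [AddCommGroup N] [Module R N] : AddSubgroup N where
  carrier := {y | ∃ h : X →ₗ[R] N, h ξ = y}
  zero_mem' := ⟨0, rfl⟩
  add_mem' := by
    rintro a b ⟨h₁, rfl⟩ ⟨h₂, rfl⟩
    exact ⟨h₁ + h₂, rfl⟩
  neg_mem' := by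
    rintro a ⟨h₁, rfl⟩
    exact ⟨-h₁, rfl⟩

variable {R}
variable {X : Type u} [AddCommGroup X] [Module R X] {ξ : X}
variable {X' : Type u} [AddCommGroup X'] [Module R X'] {ξ' : X'}
variable {N N' : Type u} [AddCommGroup N] [Module R N] [AddCommGroup N'] [Module R N']

theorem mem_ptTrace_iff {y : N} : y ∈ ptTrace R X ξ N ↔ ∃ h : X →ₗ[R] N, h ξ = y := Iff.rfl

theorem ptTrace_map (u : N →ₗ[R] N') {y : N} (hy : y ∈ ptTrace R X ξ N) :
    u y ∈ ptTrace R X ξ N' := by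
  obtain ⟨h, rfl⟩ := hy
  exact ⟨u.comp h, rfl⟩

theorem ptTrace_antitone (ρ : X →ₗ[R] X') (hρ : ρ ξ = ξ') :
    ptTrace R X' ξ' N ≤ ptTrace R X ξ N := by
  rintro y ⟨h, rfl⟩
  exact ⟨h.comp ρ, by simp [hρ]⟩

theorem mem_ptTrace_pi {ι : Type u} {x : ι → N}
    (hx : ∀ i, x i ∈ ptTrace R X ξ N) : x ∈ ptTrace R X ξ (ι → N) := by
  choose h hh using hx
  exact ⟨LinearMap.pi h, funext fun i => hh i⟩

theorem ptTrace_pi_coord {ι : Type u} {x : ι → N}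
    (hx : x ∈ ptTrace R X ξ (ι → N)) (i : ι) : x i ∈ ptTrace R X ξ N :=
  ptTrace_map (LinearMap.proj i) hx

theorem ptTrace_directSum_coord {J : Type u} {y : DirectSum J fun _ : J => N}
    (hy : y ∈ ptTrace R X ξ (DirectSum J fun _ : J => N)) (j : J) :
    y j ∈ ptTrace R X ξ N :=
  ptTrace_map (DirectSum.component R J (fun _ : J => N) j) hy

theorem mem_ptTrace_directSum {J : Type u} {y : DirectSum J fun _ : J => N}
    (hy : ∀ j, y j ∈ ptTrace R X ξ N) :
    y ∈ ptTrace R X ξ (DirectSum J fun _ : J => N) := by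
  classical
  rw [← DirectSum.sum_support_of y]
  refine AddSubgroup.sum_mem _ fun j _ => ?_
  have := ptTrace_map (N := N) (DirectSum.lof R J (fun _ : J => N) j) (hy j)
  simpa [DirectSum.lof_eq_of] using this

/-- A chain of pointed modules, connected by pointed maps. -/
structure TrChain (R : Type u) [Ring R] where
  X : ℕ → Type u
  [acg : ∀ n, AddCommGroup (X n)]
  [mod : ∀ n, Module R (X n)]
  ξ : ∀ n, X n
  π : ∀ n, X n →ₗ[R] X (n + 1)
  hξ : ∀ n, π n (ξ n) = ξ (n + 1)

attribute [instance] TrChain.acg TrChain.mod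

/-- The trace of the `n`-th stage of a chain. -/
def TrChain.tr (c : TrChain R) (n : ℕ) (N : Type u) [AddCommGroup N] [Module R N] :
    AddSubgroup N :=
  ptTrace R (c.X n) (c.ξ n) N

theorem TrChain.tr_succ_le (c : TrChain R) (n : ℕ) :
    c.tr (n + 1) N ≤ c.tr n N :=
  ptTrace_antitone (c.π n) (c.hξ n)

theorem TrChain.tr_antitone (c : TrChain R) {m n : ℕ} (h : m ≤ n) :
    c.tr n N ≤ c.tr m N := by
  induction n, h using Nat.le_induction with
  | base => exact le_rfl
  | succ n hmn ih => exact (c.tr_succ_le n).trans ih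

end TraceAPI


section EqSystem

open scoped Classical

variable {R : Type u} [Ring R]
variable {K L N : Type u} [AddCommGroup K] [AddCommGroup L] [AddCommGroup N]
variable [Module R K] [Module R L] [Module R N]

/-- A formal linear equation `∑ i, r i • x (v i) = c` with variables indexed by `L` and
constant in `N`. -/
structure ModEqn (R L N : Type u) [Ring R] [AddCommGroup L] [Module R L] where
  n : ℕ
  r : Fin n → R
  v : Fin n → L
  c : N

/-- `a` satisfies the equation `e`. -/
def ModEqn.Sat (e : ModEqn R L N) (a : L → N) : Prop :=
  ∑ i, e.r i • a (e.v i) = e.c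

/-- `a` satisfies the homogenization of the equation `e`. -/
def ModEqn.HSat (e : ModEqn R L N) (a : L → N) : Prop :=
  ∑ i, e.r i • a (e.v i) = 0

/-- All equations over `L` with constants in `N` which are "witnessed" in `L` over the
pure submodule `f : K → L`, with constants transported by `g : K → N`. -/
def eqnSet (f : K →ₗ[R] L) (g : K →ₗ[R] N) : Set (ModEqn R L N) :=
  {e | ∃ k : K, e.c = g k ∧ ∑ i, e.r i • e.v i = f k}

/-- `A` is a finitely-consistent partial assignment. -/
def Solv (f : K →ₗ[R] L) (g : K →ₗ[R] N) (A : Set (L × N)) : Prop :=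
  ∀ E : Finset (ModEqn R L N), ↑E ⊆ eqnSet f g → ∀ B : Finset (L × N), ↑B ⊆ A →
    ∃ a : L → N, (∀ e ∈ E, e.Sat a) ∧ ∀ q ∈ B, a q.1 = q.2

variable (E : Finset (ModEqn R L N)) (B : Finset (L × N)) (l₀ : L)

/-- The (finite) set of variables appearing in `E`, `B`, `l₀`. -/
noncomputable def pvars : Finset L :=
  (E.biUnion fun e => Finset.image e.v Finset.univ) ∪ B.image Prod.fst ∪ {l₀}

theorem mem_pvars_of_eqn {e : ModEqn R L N} (he : e ∈ E) (i : Fin e.n) :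
    e.v i ∈ pvars E B l₀ := by
  classical
  exact Finset.mem_union_left _ (Finset.mem_union_left _
    (Finset.mem_biUnion.2 ⟨e, he, Finset.mem_image_of_mem _ (Finset.mem_univ i)⟩))

theorem mem_pvars_of_pair {q : L × N} (hq : q ∈ B) : q.1 ∈ pvars E B l₀ := by
  classical
  exact Finset.mem_union_left _ (Finset.mem_union_right _ (Finset.mem_image_of_mem _ hq))

theorem mem_pvars_l₀ : l₀ ∈ pvars E B l₀ := by
  classical
  exact Finset.mem_union_right _ (Finset.mem_singleton_self _)

/-- Embedding of `L`-indexed variables as basis vectors (or `0` if absent). -/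
noncomputable def pemb : L → (↑(pvars E B l₀) → R) := fun l v => if (v : L) = l then 1 else 0

/-- Evaluation of a formal linear combination along an assignment `a`. -/
noncomputable def pev {N' : Type u} [AddCommGroup N'] [Module R N'] (a : L → N') :
    (↑(pvars E B l₀) → R) →ₗ[R] N' where
  toFun w := ∑ v : ↑(pvars E B l₀), w v • a ↑v
  map_add' w₁ w₂ := by simp [add_smul, Finset.sum_add_distrib]
  map_smul' r w := by simp [mul_smul, Finset.smul_sum]

theorem pev_pemb {N' : Type u} [AddCommGroup N'] [Module R N'] (a : L → N') {l : L}
    (hl : l ∈ pvars E B l₀) : pev E B l₀ a (pemb E B l₀ l) = a l := by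
  classical
  show (∑ v : ↑(pvars E B l₀), pemb E B l₀ l v • a ↑v) = a l
  rw [Finset.sum_eq_single (⟨l, hl⟩ : ↑(pvars E B l₀))]
  · simp [pemb]
  · intro v _ hv
    have : (v : L) ≠ l := fun h => hv (Subtype.ext h)
    simp [pemb, this]
  · intro h
    exact absurd (Finset.mem_univ _) h

/-- The row vector of an equation. -/
noncomputable def prow (e : ModEqn R L N) : ↑(pvars E B l₀) → R :=
  ∑ i, e.r i • pemb E B l₀ (e.v i)

/-- The set of relations of the pointed module attached to `(E, B, l₀)`. -/
noncomputable def prows : Set (↑(pvars E B l₀) → R) :=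
  (prow E B l₀ '' ↑E) ∪ ((fun q : L × N => pemb E B l₀ q.1) '' ↑B)

/-- The relation submodule. -/
noncomputable def pRel : Submodule R (↑(pvars E B l₀) → R) := Submodule.span R (prows E B l₀)

/-- The pointed finitely presented module attached to `(E, B, l₀)`. -/
abbrev pXmod := (↑(pvars E B l₀) → R) ⧸ pRel E B l₀

/-- Its distinguished point. -/
noncomputable def pξ : pXmod E B l₀ := Submodule.Quotient.mk (pemb E B l₀ l₀)

theorem pev_prow {N' : Type u} [AddCommGroup N'] [Module R N'] (a : L → N')
    {e : ModEqn R L N} (he : e ∈ E) :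
    pev E B l₀ a (prow E B l₀ e) = ∑ i, e.r i • a (e.v i) := by
  rw [prow, map_sum]
  refine Finset.sum_congr rfl fun i _ => ?_
  rw [map_smul, pev_pemb E B l₀ a (mem_pvars_of_eqn E B l₀ he i)]

theorem pRel_le_ker {N' : Type u} [AddCommGroup N'] [Module R N'] (a : L → N')
    (hE : ∀ e ∈ E, ∑ i, e.r i • a (e.v i) = 0) (hB : ∀ q ∈ B, a q.1 = 0) :
    pRel E B l₀ ≤ LinearMap.ker (pev E B l₀ a) := by
  rw [pRel, Submodule.span_le]
  rintro w (⟨e, he, rfl⟩ | ⟨q, hq, rfl⟩)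
  · exact LinearMap.mem_ker.2 (by rw [pev_prow E B l₀ a he]; exact hE e he)
  · exact LinearMap.mem_ker.2
      (by rw [pev_pemb E B l₀ a (mem_pvars_of_pair E B l₀ hq)]; exact hB q hq)

theorem mem_ptTrace_pXmod_iff {y : N} :
    y ∈ ptTrace R (pXmod E B l₀) (pξ E B l₀) N ↔
      ∃ a : L → N, (∀ e ∈ E, e.HSat a) ∧ (∀ q ∈ B, a q.1 = 0) ∧ a l₀ = y := by
  constructor
  · rintro ⟨h, rfl⟩
    refine ⟨fun l => h (Submodule.Quotient.mk (pemb E B l₀ l)), fun e he => ?_, fun q hq => ?_, rfl⟩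
    · show (∑ i, e.r i • h (Submodule.Quotient.mk (pemb E B l₀ (e.v i)))) = 0
      have : (Submodule.Quotient.mk (prow E B l₀ e) : pXmod E B l₀) = 0 :=
        (Submodule.Quotient.mk_eq_zero _).2 (Submodule.subset_span (Or.inl ⟨e, he, rfl⟩))
      calc (∑ i, e.r i • h (Submodule.Quotient.mk (pemb E B l₀ (e.v i))))
          = (h.comp (pRel E B l₀).mkQ) (prow E B l₀ e) := by
            rw [prow, map_sum]
            simp only [map_smul]
            rfl
        _ = 0 := by
            show h (Submodule.Quotient.mk (prow E B l₀ e)) = 0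
            rw [this, map_zero]
    · have : (Submodule.Quotient.mk (pemb E B l₀ q.1) : pXmod E B l₀) = 0 :=
        (Submodule.Quotient.mk_eq_zero _).2 (Submodule.subset_span (Or.inr ⟨q, hq, rfl⟩))
      show h (Submodule.Quotient.mk (pemb E B l₀ q.1)) = 0
      rw [this, map_zero]
  · rintro ⟨a, hE, hB, rfl⟩
    refine ⟨(pRel E B l₀).liftQ (pev E B l₀ a) (pRel_le_ker E B l₀ a hE hB), ?_⟩
    rw [pξ, Submodule.liftQ_apply, pev_pemb E B l₀ a (mem_pvars_l₀ E B l₀)]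

end EqSystem

section EqSystem2

open scoped Classical

variable {R : Type u} [Ring R]
variable {K L N : Type u} [AddCommGroup K] [AddCommGroup L] [AddCommGroup N]
variable [Module R K] [Module R L] [Module R N]
variable (E : Finset (ModEqn R L N)) (B : Finset (L × N)) (l₀ : L)

theorem pvars_mono {E' : Finset (ModEqn R L N)} {B' : Finset (L × N)} (hE : E ⊆ E')
    (hB : B ⊆ B') : pvars E B l₀ ⊆ pvars E' B' l₀ := by
  intro l hl
  rcases Finset.mem_union.1 hl with h | h
  · rcases Finset.mem_union.1 h with h | h
    · obtain ⟨e, he, hi⟩ := Finset.mem_biUnion.1 h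
      exact Finset.mem_union_left _ (Finset.mem_union_left _
        (Finset.mem_biUnion.2 ⟨e, hE he, hi⟩))
    · obtain ⟨q, hq, rfl⟩ := Finset.mem_image.1 h
      exact mem_pvars_of_pair _ _ _ (hB hq)
  · rw [Finset.mem_singleton] at h
    subst h
    exact mem_pvars_l₀ _ _ _

variable {E B} in
/-- The pointed map between the associated pointed modules, along inclusions of systems. -/
noncomputable def pmap {E' : Finset (ModEqn R L N)} {B' : Finset (L × N)} (hE : E ⊆ E')
    (hB : B ⊆ B') : pXmod E B l₀ →ₗ[R] pXmod E' B' l₀ := by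
  refine Submodule.mapQ _ _ (pev E B l₀ (fun l => pemb E' B' l₀ l)) ?_
  rw [pRel, Submodule.span_le]
  rintro w (⟨e, he, rfl⟩ | ⟨q, hq, rfl⟩)
  · refine Submodule.mem_comap.2 ?_
    rw [pev_prow E B l₀ _ he]
    exact Submodule.subset_span (Or.inl ⟨e, hE he, rfl⟩)
  · refine Submodule.mem_comap.2 ?_
    rw [pev_pemb E B l₀ _ (mem_pvars_of_pair E B l₀ hq)]
    exact Submodule.subset_span (Or.inr ⟨q, hB hq, rfl⟩)

variable {E B} in
theorem pmap_pξ {E' : Finset (ModEqn R L N)} {B' : Finset (L × N)} (hE : E ⊆ E')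
    (hB : B ⊆ B') : pmap l₀ hE hB (pξ E B l₀) = pξ E' B' l₀ := by
  rw [pξ, pmap, Submodule.mapQ_apply, pev_pemb E B l₀ _ (mem_pvars_l₀ E B l₀), pξ]

theorem pXmod_finitePresentation : Module.FinitePresentation R (pXmod E B l₀) := by
  refine Module.finitePresentation_of_free_of_surjective (pRel E B l₀).mkQ
    (Submodule.mkQ_surjective _) ?_
  rw [Submodule.ker_mkQ]
  exact Submodule.fg_span (Set.Finite.union (E.finite_toSet.image _) (B.finite_toSet.image _))

/-- The key consequence of purity: the empty partial assignment is finitely consistent. -/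
theorem solv_empty (f : K →ₗ[R] L) (g : K →ₗ[R] N) (hf : IsPureMono R f) :
    Solv f g (∅ : Set (L × N)) := by
  intro E hE B hB
  have hBv : ∀ q ∈ B, False := fun q hq => Set.notMem_empty _ (hB hq)
  have hfp := pXmod_finitePresentation (R := R) E (∅ : Finset (L × N)) (0 : L)
  have hker : pRel E (∅ : Finset (L × N)) (0 : L) ≤
      LinearMap.ker ((LinearMap.range f).mkQ.comp
        (pev E (∅ : Finset (L × N)) (0 : L) (fun l => l))) := by
    rw [pRel, Submodule.span_le]
    rintro w (⟨e, he, rfl⟩ | ⟨q, hq, rfl⟩)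
    · obtain ⟨k, hkc, hks⟩ := hE he
      refine LinearMap.mem_ker.2 ?_
      rw [LinearMap.comp_apply, pev_prow E _ _ _ he]
      have hks' : (∑ i, e.r i • (fun l : L => l) (e.v i)) = f k := hks
      rw [hks', Submodule.mkQ_apply, Submodule.Quotient.mk_eq_zero]
      exact LinearMap.mem_range_self f k
    · exact absurd hq (by simp)
  obtain ⟨h', hh'⟩ := hf.2 (pXmod E (∅ : Finset (L × N)) (0 : L)) inferInstance inferInstance hfp
    ((pRel E (∅ : Finset (L × N)) (0 : L)).liftQ _ hker)
  have hkk : ∀ l ∈ pvars E (∅ : Finset (L × N)) (0 : L), ∃ k : K,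
      f k = l - h' (Submodule.Quotient.mk (pemb E (∅ : Finset (L × N)) (0 : L) l)) := by
    intro l hl
    have h1 := LinearMap.congr_fun hh'
      (Submodule.Quotient.mk (pemb E (∅ : Finset (L × N)) (0 : L) l))
    rw [LinearMap.comp_apply, Submodule.liftQ_apply, LinearMap.comp_apply,
      pev_pemb E _ _ _ hl] at h1
    simp only [Submodule.mkQ_apply] at h1
    have h2 : h' (Submodule.Quotient.mk (pemb E (∅ : Finset (L × N)) (0 : L) l)) - l
        ∈ LinearMap.range f := (Submodule.Quotient.eq _).1 h1
    obtain ⟨k, hk⟩ := (neg_mem h2 : _ ∈ LinearMap.range f)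
    exact ⟨k, by rw [hk, neg_sub]⟩
  refine ⟨fun l => if hl : l ∈ pvars E (∅ : Finset (L × N)) (0 : L)
      then g ((hkk l hl).choose) else 0,
    fun e he => ?_, fun q hq' => absurd (hBv q hq') id⟩
  obtain ⟨k, hkc, hks⟩ := hE he
  have hmem : ∀ i : Fin e.n, e.v i ∈ pvars E (∅ : Finset (L × N)) (0 : L) :=
    mem_pvars_of_eqn E _ _ he
  rw [ModEqn.Sat]
  have step1 : (∑ i, e.r i •
      (if hl : e.v i ∈ pvars E (∅ : Finset (L × N)) (0 : L)
        then g ((hkk _ hl).choose) else 0)) =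
      g (∑ i, e.r i • (hkk _ (hmem i)).choose) := by
    rw [map_sum]
    refine Finset.sum_congr rfl fun i _ => ?_
    rw [dif_pos (hmem i), map_smul]
  rw [step1]
  have key : f (∑ i, e.r i • (hkk _ (hmem i)).choose) = f k := by
    rw [map_sum]
    have heq : (∑ i, f (e.r i • (hkk _ (hmem i)).choose)) =
        ∑ i, e.r i • (e.v i -
          h' (Submodule.Quotient.mk (pemb E (∅ : Finset (L × N)) (0 : L) (e.v i)))) := by
      refine Finset.sum_congr rfl fun i _ => ?_
      rw [map_smul, (hkk _ (hmem i)).choose_spec]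
    rw [heq]
    have hrow : (∑ i, e.r i • h'
        (Submodule.Quotient.mk (pemb E (∅ : Finset (L × N)) (0 : L) (e.v i)))) =
        (h'.comp (pRel E (∅ : Finset (L × N)) (0 : L)).mkQ)
          (prow E (∅ : Finset (L × N)) (0 : L) e) := by
      rw [prow, map_sum]
      simp only [map_smul]
      rfl
    have hrow0 : (h'.comp (pRel E (∅ : Finset (L × N)) (0 : L)).mkQ)
        (prow E (∅ : Finset (L × N)) (0 : L) e) = 0 := by
      show h' (Submodule.Quotient.mk (prow E (∅ : Finset (L × N)) (0 : L) e)) = 0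
      have hz : (Submodule.Quotient.mk (prow E (∅ : Finset (L × N)) (0 : L) e) :
          pXmod E (∅ : Finset (L × N)) (0 : L)) = 0 :=
        (Submodule.Quotient.mk_eq_zero _).2 (Submodule.subset_span (Or.inl ⟨e, he, rfl⟩))
      rw [hz, map_zero]
    calc (∑ i, e.r i • (e.v i -
          h' (Submodule.Quotient.mk (pemb E (∅ : Finset (L × N)) (0 : L) (e.v i)))))
        = (∑ i, e.r i • e.v i) - ∑ i, e.r i • h'
            (Submodule.Quotient.mk (pemb E (∅ : Finset (L × N)) (0 : L) (e.v i))) := by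
          simp [smul_sub, Finset.sum_sub_distrib]
      _ = f k := by rw [hrow, hrow0, hks, sub_zero]
  have hfin : (∑ i, e.r i • (hkk _ (hmem i)).choose) = k := hf.1 key
  rw [hfin, hkc]

end EqSystem2

section Compactness

open scoped Classical

theorem exists_mem_of_finset_subset_sUnion {α : Type*} {cs : Set (Set α)}
    (hchain : IsChain (· ⊆ ·) cs) (hne : cs.Nonempty) :
    ∀ B : Finset α, ↑B ⊆ ⋃₀ cs → ∃ s ∈ cs, ↑B ⊆ s := by
  classical
  intro B
  induction B using Finset.induction_on with
  | empty => exact fun _ => ⟨hne.choose, hne.choose_spec, by simp⟩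
  | insert a B ha ih =>
    intro hsub
    obtain ⟨s, hs, hBs⟩ := ih (fun q hq => hsub
      (by rw [Finset.coe_insert]; exact Set.mem_insert_iff.2 (Or.inr hq)))
    obtain ⟨t, ht, hat⟩ := Set.mem_sUnion.1 (hsub
      (by rw [Finset.coe_insert]; exact Set.mem_insert _ _))
    rcases hchain.total hs ht with h | h
    · refine ⟨t, ht, ?_⟩
      intro q hq
      rcases Finset.mem_insert.1 (by exact_mod_cast hq) with rfl | hq'
      · exact hat
      · exact h (hBs hq')
    · refine ⟨s, hs, ?_⟩
      intro q hq
      rcases Finset.mem_insert.1 (by exact_mod_cast hq) with rfl | hq'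
      · exact h hat
      · exact hBs hq'

variable {R : Type u} [Ring R]
variable {K L N : Type u} [AddCommGroup K] [AddCommGroup L] [AddCommGroup N]
variable [Module R K] [Module R L] [Module R N]
variable (f : K →ₗ[R] L) (g : K →ₗ[R] N)

theorem solv_insert (hdcc : ∀ c : TrChain R, ∃ n, c.tr n N ≤ c.tr (n + 1) N)
    {A : Set (L × N)} (hA : Solv f g A) (l₀ : L) :
    ∃ c : N, Solv f g (insert (l₀, c) A) := by
  classical
  let D := {d : Finset (ModEqn R L N) × Finset (L × N) // ↑d.1 ⊆ eqnSet f g ∧ ↑d.2 ⊆ A}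
  let SolSet : D → Set N := fun d =>
    {c | ∃ a : L → N, (∀ e ∈ d.1.1, e.Sat a) ∧ (∀ q ∈ d.1.2, a q.1 = q.2) ∧ a l₀ = c}
  let HSet : D → Set N := fun d =>
    {c | ∃ a : L → N, (∀ e ∈ d.1.1, e.HSat a) ∧ (∀ q ∈ d.1.2, a q.1 = 0) ∧ a l₀ = c}
  have hne : ∀ d : D, (SolSet d).Nonempty := by
    intro d
    obtain ⟨a, h1, h2⟩ := hA d.1.1 d.2.1 d.1.2 d.2.2
    exact ⟨a l₀, a, h1, h2, rfl⟩
  have hsub2 : ∀ (d : D) (c c' : N), c ∈ SolSet d → c' ∈ SolSet d → c - c' ∈ HSet d := by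
    rintro d c c' ⟨a, h1, h2, rfl⟩ ⟨a', h1', h2', rfl⟩
    refine ⟨a - a', fun e he => ?_, fun q hq => ?_, rfl⟩
    · rw [ModEqn.HSat]
      have : (∑ i, e.r i • (a - a') (e.v i)) =
          (∑ i, e.r i • a (e.v i)) - ∑ i, e.r i • a' (e.v i) := by
        simp [smul_sub, Finset.sum_sub_distrib]
      rw [this, h1 e he, h1' e he, sub_self]
    · show a q.1 - a' q.1 = 0
      rw [h2 q hq, h2' q hq, sub_self]
  have hadd : ∀ (d : D) (c y : N), c ∈ SolSet d → y ∈ HSet d → c + y ∈ SolSet d := by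
    rintro d c y ⟨a, h1, h2, rfl⟩ ⟨a', h1', h2', rfl⟩
    refine ⟨a + a', fun e he => ?_, fun q hq => ?_, rfl⟩
    · rw [ModEqn.Sat]
      have : (∑ i, e.r i • (a + a') (e.v i)) =
          (∑ i, e.r i • a (e.v i)) + ∑ i, e.r i • a' (e.v i) := by
        simp [smul_add, Finset.sum_add_distrib]
      rw [this, h1 e he, h1' e he, add_zero]
    · show a q.1 + a' q.1 = q.2
      rw [h2 q hq, h2' q hq, add_zero]
  have hmono : ∀ d d' : D, d.1.1 ⊆ d'.1.1 → d.1.2 ⊆ d'.1.2 → SolSet d' ⊆ SolSet d := by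
    rintro d d' hE hB c ⟨a, h1, h2, rfl⟩
    exact ⟨a, fun e he => h1 e (hE he), fun q hq => h2 q (hB hq), rfl⟩
  have hHmem : ∀ (d : D) (c : N), c ∈ HSet d ↔
      c ∈ ptTrace R (pXmod d.1.1 d.1.2 l₀) (pξ d.1.1 d.1.2 l₀) N := by
    intro d c
    rw [mem_ptTrace_pXmod_iff]
    rfl
  -- find a least solution set
  have hleast : ∃ dm : D, ∀ d : D, SolSet dm ⊆ SolSet d := by
    by_contra hno
    push_neg at hno
    have step : ∀ d : D, ∃ d' : D,
        (d.1.1 ⊆ d'.1.1 ∧ d.1.2 ⊆ d'.1.2) ∧ SolSet d' ⊂ SolSet d := by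
      intro d
      obtain ⟨d', hd'⟩ := hno d
      refine ⟨⟨(d.1.1 ∪ d'.1.1, d.1.2 ∪ d'.1.2), ?_, ?_⟩, ⟨?_, ?_⟩, ?_, ?_⟩
      · push_cast
        exact Set.union_subset d.2.1 d'.2.1
      · push_cast
        exact Set.union_subset d.2.2 d'.2.2
      · exact Finset.subset_union_left
      · exact Finset.subset_union_left
      · exact hmono d _ Finset.subset_union_left Finset.subset_union_left
      · intro hback
        exact hd' ((hback.trans
          (hmono d' _ Finset.subset_union_right Finset.subset_union_right)))
    let seq : ℕ → D := fun n =>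
      Nat.rec ⟨(∅, ∅), by simp, by simp⟩ (fun _ d => (step d).choose) n
    have hseq : ∀ n, (((seq n).1.1 ⊆ (seq (n + 1)).1.1 ∧ (seq n).1.2 ⊆ (seq (n + 1)).1.2) ∧
        SolSet (seq (n + 1)) ⊂ SolSet (seq n)) := fun n => (step (seq n)).choose_spec
    let chain : TrChain R :=
      { X := fun n => pXmod (seq n).1.1 (seq n).1.2 l₀
        acg := fun n => inferInstance
        mod := fun n => inferInstance
        ξ := fun n => pξ (seq n).1.1 (seq n).1.2 l₀
        π := fun n => pmap l₀ (hseq n).1.1 (hseq n).1.2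
        hξ := fun n => pmap_pξ l₀ (hseq n).1.1 (hseq n).1.2 }
    obtain ⟨n, hle⟩ := hdcc chain
    have hH : HSet (seq n) ⊆ HSet (seq (n + 1)) := by
      intro c hc
      rw [hHmem]
      exact hle ((hHmem (seq n) c).1 hc)
    -- contradiction with strictness
    obtain ⟨c₀, hc₀⟩ := hne (seq (n + 1))
    have : SolSet (seq n) ⊆ SolSet (seq (n + 1)) := by
      intro c hc
      have hc₀' : c₀ ∈ SolSet (seq n) := (hseq n).2.1 hc₀
      have hdiff : c - c₀ ∈ HSet (seq (n + 1)) := hH (hsub2 _ _ _ hc hc₀')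
      have := hadd _ _ _ hc₀ hdiff
      simpa using this
    exact (hseq n).2.2 this
  obtain ⟨dm, hdm⟩ := hleast
  obtain ⟨cm, hcm⟩ := hne dm
  refine ⟨cm, ?_⟩
  intro E hE B hB
  have hBf : ↑(B.filter (fun q => q ∈ A)) ⊆ A := by
    intro q hq
    exact (Finset.mem_filter.1 hq).2
  have hmem : cm ∈ SolSet ⟨(E, B.filter (fun q => q ∈ A)), hE, hBf⟩ := hdm _ hcm
  obtain ⟨a, h1, h2, h3⟩ := hmem
  refine ⟨a, h1, fun q hq => ?_⟩
  rcases Set.mem_insert_iff.1 (hB hq) with h | h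
  · rw [h]
    exact h3
  · exact h2 q (Finset.mem_filter.2 ⟨hq, h⟩)

theorem extension_exists (hdcc : ∀ c : TrChain R, ∃ n, c.tr n N ≤ c.tr (n + 1) N)
    (hf : IsPureMono R f) : ∃ h : L →ₗ[R] N, h.comp f = g := by
  classical
  obtain ⟨Astar, -, hmax⟩ := zorn_subset_nonempty {A : Set (L × N) | Solv f g A}
    (fun cs hcs hchain hne => ⟨⋃₀ cs, by
      intro E hE B hB
      obtain ⟨s, hs, hBs⟩ := exists_mem_of_finset_subset_sUnion hchain hne B hB
      exact hcs hs E hE B hBs, fun s hs => Set.subset_sUnion_of_mem hs⟩)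
    ∅ (solv_empty f g hf)
  have htot : ∀ l : L, ∃ c, (l, c) ∈ Astar := by
    intro l
    by_contra hno
    push_neg at hno
    obtain ⟨c, hc⟩ := solv_insert f g hdcc hmax.1 l
    have : insert (l, c) Astar ⊆ Astar := hmax.2 hc (Set.subset_insert _ _)
    exact hno c (this (Set.mem_insert _ _))
  set x : L → N := fun l => (htot l).choose with hxdef
  have hx : ∀ l, (l, x l) ∈ Astar := fun l => (htot l).choose_spec
  have key : ∀ e : ModEqn R L N, e ∈ eqnSet f g → (∑ i, e.r i • x (e.v i)) = e.c := by
    intro e he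
    obtain ⟨a, h1, h2⟩ := hmax.1 {e} (by simpa using he)
      (Finset.image (fun i => (e.v i, x (e.v i))) Finset.univ)
      (by
        intro q hq
        obtain ⟨i, -, rfl⟩ := Finset.mem_image.1 (by exact_mod_cast hq)
        exact hx _)
    have hS := h1 e (Finset.mem_singleton_self e)
    rw [ModEqn.Sat] at hS
    rw [← hS]
    refine Finset.sum_congr rfl fun i _ => ?_
    rw [h2 (e.v i, x (e.v i)) (Finset.mem_image_of_mem _ (Finset.mem_univ i))]
  have hadd : ∀ l l' : L, x (l + l') = x l + x l' := by
    intro l l'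
    have he : (⟨3, ![1, 1, -1], ![l, l', l + l'], 0⟩ : ModEqn R L N) ∈ eqnSet f g := by
      refine ⟨0, by simp, ?_⟩
      rw [Fin.sum_univ_three]
      simp only [Matrix.cons_val_zero, Matrix.cons_val_one, Matrix.head_cons,
        Matrix.cons_val_two, Matrix.tail_cons, one_smul, neg_one_smul, map_zero]
      abel
    have h := key _ he
    rw [Fin.sum_univ_three] at h
    simp only [Matrix.cons_val_zero, Matrix.cons_val_one, Matrix.head_cons,
      Matrix.cons_val_two, Matrix.tail_cons, one_smul, neg_one_smul] at h
    have h' : x l + x l' - x (l + l') = 0 := by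
      rw [sub_eq_add_neg]
      exact h
    exact (sub_eq_zero.1 h').symm
  have hsmul : ∀ (r : R) (l : L), x (r • l) = r • x l := by
    intro r l
    have he : (⟨2, ![r, -1], ![l, r • l], 0⟩ : ModEqn R L N) ∈ eqnSet f g := by
      refine ⟨0, by simp, ?_⟩
      rw [Fin.sum_univ_two]
      simp only [Matrix.cons_val_zero, Matrix.cons_val_one, Matrix.head_cons,
        neg_one_smul, map_zero]
      abel
    have h := key _ he
    rw [Fin.sum_univ_two] at h
    simp only [Matrix.cons_val_zero, Matrix.cons_val_one, Matrix.head_cons,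
      neg_one_smul] at h
    have h' : r • x l - x (r • l) = 0 := by
      rw [sub_eq_add_neg]
      exact h
    exact (sub_eq_zero.1 h').symm
  have hmapf : ∀ k : K, x (f k) = g k := by
    intro k
    have he : (⟨1, ![1], ![f k], g k⟩ : ModEqn R L N) ∈ eqnSet f g := by
      refine ⟨k, rfl, ?_⟩
      rw [Fin.sum_univ_one]
      simp
    have h := key _ he
    rw [Fin.sum_univ_one] at h
    simpa using h
  refine ⟨{ toFun := x, map_add' := hadd, map_smul' := hsmul }, ?_⟩
  ext k
  exact hmapf k

end Compactness

section ChaseArgument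

open scoped Classical

variable {R : Type u} [Ring R]

theorem TrChain.tr_def (c : TrChain R) (n : ℕ) (N : Type u) [AddCommGroup N] [Module R N] :
    c.tr n N = ptTrace R (c.X n) (c.ξ n) N := rfl

/-- The central combinatorial theorem: if `Prod(M) ⊆ Add(M)`, then there is no strictly
descending chain of pointed trace subgroups of `M`. -/
theorem traceDCC_of_hsub (M : Type u) [AddCommGroup M] [Module R M]
    (hsub : ∀ (X : Type u) (_ : AddCommGroup X) (_ : Module R X),
      MemProd R M X → MemAdd R M X) (c : TrChain R) :
    ∃ n, c.tr n M ≤ c.tr (n + 1) M := by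
  classical
  by_contra hno
  push_neg at hno
  have ha : ∀ n, ∃ b, b ∈ c.tr n M ∧ b ∉ c.tr (n + 1) M := fun n =>
    SetLike.not_le_iff_exists.1 (hno n)
  -- the big product `P` over `ℕ × Set (ℕ → M)` is a summand of a direct sum of copies of `M`
  obtain ⟨J, i, p, hpi⟩ := hsub ((ℕ × Set (ℕ → M)) → M) inferInstance inferInstance
    ⟨ℕ × Set (ℕ → M), LinearMap.id, LinearMap.id, LinearMap.id_comp _⟩
  have hpi' : ∀ t : (ℕ × Set (ℕ → M)) → M, p (i t) = t := fun t => LinearMap.congr_fun hpi t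
  -- the filtration of the product
  set T : ℕ → Set ((ℕ × Set (ℕ → M)) → M) := fun k =>
    {x | ∀ q : ℕ × Set (ℕ → M), (q.1 < k → x q = 0) ∧ x q ∈ c.tr q.1 M} with hT
  have hTP : ∀ (k : ℕ) (x : (ℕ × Set (ℕ → M)) → M), x ∈ T k →
      x ∈ ptTrace R (c.X k) (c.ξ k) ((ℕ × Set (ℕ → M)) → M) := by
    intro k x hx
    refine mem_ptTrace_pi fun q => ?_
    by_cases hq : q.1 < k
    · rw [(hx q).1 hq]
      exact zero_mem _
    · exact c.tr_antitone (not_lt.1 hq) (hx q).2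
  -- The Chase-style support lemma
  have chase : ∃ (k : ℕ) (F : Finset J), ∀ (m : ℕ) (t : (ℕ × Set (ℕ → M)) → M),
      t ∈ T k → ∀ j ∉ F, i t j ∈ c.tr m M := by
    by_contra hch
    push_neg at hch
    -- one step of the recursion
    have hstep : ∀ kF : ℕ × Finset J,
        ∃ z : ℕ × ((ℕ × Set (ℕ → M)) → M) × J × ℕ × Finset J,
          kF.1 < z.1 ∧
          z.2.1 ∈ T kF.1 ∧
          (∀ q : ℕ × Set (ℕ → M), z.1 ≤ q.1 → z.2.1 q = 0) ∧
          z.2.2.1 ∉ kF.2 ∧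
          i z.2.1 z.2.2.1 ∉ c.tr z.2.2.2.1 M ∧
          z.2.2.2.1 ≤ z.1 ∧
          (∀ j ∉ z.2.2.2.2, i z.2.1 j = 0) := by
      rintro ⟨k, F⟩
      obtain ⟨m, t, htk, j, hjF, hjm⟩ := hch k F
      refine ⟨⟨max (k + 1) m, fun q => if q.1 < max (k + 1) m then t q else 0, j, m,
        (i fun q => if q.1 < max (k + 1) m then t q else 0).support⟩,
        lt_of_lt_of_le (Nat.lt_succ_self k) (le_max_left _ _), ?_, ?_, hjF, ?_, le_max_right _ _,
        ?_⟩
      · -- head is in `T k`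
        intro q
        constructor
        · intro hq
          by_cases h' : q.1 < max (k + 1) m
          · simp only [if_pos h']
            exact (htk q).1 hq
          · simp only [if_neg h']
        · by_cases h' : q.1 < max (k + 1) m
          · simp only [if_pos h']
            exact (htk q).2
          · simp only [if_neg h']
            exact zero_mem _
      · -- head vanishes at high levels
        intro q hq
        simp only [if_neg (not_lt.2 hq)]
      · -- head still sticks out at `j`
        set x : (ℕ × Set (ℕ → M)) → M := fun q => if q.1 < max (k + 1) m then t q else 0
          with hxdef
        intro hmem
        apply hjm
        have htail : t - x ∈ T (max (k + 1) m) := by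
          intro q
          constructor
          · intro hq
            show t q - x q = 0
            rw [hxdef]
            simp only [if_pos hq, sub_self]
          · show t q - x q ∈ c.tr q.1 M
            refine sub_mem (htk q).2 ?_
            by_cases h' : q.1 < max (k + 1) m
            · rw [hxdef]; simp only [if_pos h']; exact (htk q).2
            · rw [hxdef]; simp only [if_neg h']; exact zero_mem _
        have h2 : i (t - x) j ∈ c.tr (max (k + 1) m) M :=
          ptTrace_directSum_coord (ptTrace_map i (hTP _ _ htail)) j
        have h3 : i (t - x) j ∈ c.tr m M := c.tr_antitone (le_max_right _ _) h2
        have h4 : i t j = i x j + i (t - x) j := by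
          have ht' : t = x + (t - x) := by abel
          conv_lhs => rw [ht']
          rw [map_add]
          rfl
        rw [h4]
        exact add_mem hmem h3
      · -- support property
        intro j' hj'
        exact DFinsupp.notMem_support_iff.1 hj'
    -- the recursion
    set nxt : ℕ × Finset J → ℕ × ((ℕ × Set (ℕ → M)) → M) × J × ℕ × Finset J :=
      fun kF => (hstep kF).choose with hnxt
    set st : ℕ → ℕ × Finset J := fun n =>
      Nat.rec (0, (∅ : Finset J)) (fun _ s => ((nxt s).1, s.2 ∪ (nxt s).2.2.2.2)) n with hst
    set Km : ℕ → ℕ := fun n => (st n).1 with hKm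
    set Fm : ℕ → Finset J := fun n => (st n).2 with hFm
    set Xm : ℕ → ((ℕ × Set (ℕ → M)) → M) := fun n => (nxt (st n)).2.1 with hXm
    set Jm : ℕ → J := fun n => (nxt (st n)).2.2.1 with hJm
    set Mh : ℕ → ℕ := fun n => (nxt (st n)).2.2.2.1 with hMh
    set Sm : ℕ → Finset J := fun n => (nxt (st n)).2.2.2.2 with hSm
    have hspec : ∀ n : ℕ, Km n < Km (n + 1) ∧ Xm n ∈ T (Km n) ∧
        (∀ q : ℕ × Set (ℕ → M), Km (n + 1) ≤ q.1 → Xm n q = 0) ∧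
        Jm n ∉ Fm n ∧ i (Xm n) (Jm n) ∉ c.tr (Mh n) M ∧ Mh n ≤ Km (n + 1) ∧
        (∀ j ∉ Sm n, i (Xm n) j = 0) :=
      fun n => (hstep (st n)).choose_spec
    have hFsucc : ∀ n, Fm (n + 1) = Fm n ∪ Sm n := fun n => rfl
    have hFmono : ∀ {a b : ℕ}, a ≤ b → Fm a ⊆ Fm b := by
      intro a b hab
      induction b, hab using Nat.le_induction with
      | base => exact Finset.Subset.refl _
      | succ b hab ih =>
        refine ih.trans ?_
        rw [hFsucc]
        exact Finset.subset_union_left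
    have hKmono : StrictMono Km := strictMono_nat_of_lt_succ fun n => (hspec n).1
    have hμex : ∀ n : ℕ, ∃ m, n < Km (m + 1) :=
      fun n => ⟨n, lt_of_lt_of_le (Nat.lt_succ_self n) (hKmono.le_apply)⟩
    set μ : ℕ → ℕ := fun n => Nat.find (hμex n) with hμ
    have hμ1 : ∀ n, n < Km (μ n + 1) := fun n => Nat.find_spec (hμex n)
    have hμ2 : ∀ n m, n < Km (m + 1) → μ n ≤ m := fun n m h => Nat.find_min' (hμex n) h
    have hμ3 : ∀ n m, m < μ n → Km (m + 1) ≤ n := fun n m h =>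
      not_lt.1 (Nat.find_min (hμex n) h)
    set xx : (ℕ × Set (ℕ → M)) → M := fun q => Xm (μ q.1) q with hxx
    have hym : ∀ m : ℕ, (xx - ∑ i' ∈ Finset.range (m + 1), Xm i') ∈ T (Km (m + 1)) := by
      intro m q
      have hval : (xx - ∑ i' ∈ Finset.range (m + 1), Xm i') q =
          xx q - ∑ i' ∈ Finset.range (m + 1), Xm i' q := by
        rw [Pi.sub_apply, Finset.sum_apply]
      constructor
      · intro hq
        rw [hval]
        have hsum : (∑ i' ∈ Finset.range (m + 1), Xm i' q) = Xm (μ q.1) q := by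
          refine Finset.sum_eq_single_of_mem (μ q.1)
            (Finset.mem_range.2 (Nat.lt_succ_of_le (hμ2 q.1 m hq))) ?_
          intro b hb hbne
          rcases lt_or_gt_of_ne hbne with hlt | hgt
          · exact (hspec b).2.2.1 q (hμ3 q.1 b hlt)
          · exact ((hspec b).2.1 q).1 (lt_of_lt_of_le (hμ1 q.1) (hKmono.monotone hgt))
        rw [hsum, hxx, sub_self]
      · rw [hval]
        by_cases hq : q.1 < Km (m + 1)
        · have hsum : (∑ i' ∈ Finset.range (m + 1), Xm i' q) = Xm (μ q.1) q := by
            refine Finset.sum_eq_single_of_mem (μ q.1)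
              (Finset.mem_range.2 (Nat.lt_succ_of_le (hμ2 q.1 m hq))) ?_
            intro b hb hbne
            rcases lt_or_gt_of_ne hbne with hlt | hgt
            · exact (hspec b).2.2.1 q (hμ3 q.1 b hlt)
            · exact ((hspec b).2.1 q).1 (lt_of_lt_of_le (hμ1 q.1) (hKmono.monotone hgt))
          rw [hsum, hxx, sub_self]
          exact zero_mem _
        · have hsum : (∑ i' ∈ Finset.range (m + 1), Xm i' q) = 0 := by
            refine Finset.sum_eq_zero fun b hb => ?_
            refine (hspec b).2.2.1 q ?_
            refine le_trans ?_ (not_lt.1 hq)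
            exact hKmono.monotone (Finset.mem_range.1 hb)
          rw [hsum, sub_zero, hxx]
          exact ((hspec (μ q.1)).2.1 q).2
    -- every `Jm m` is in the support of `i xx`
    have hJm_ne : ∀ m, i xx (Jm m) ≠ 0 := by
      intro m h0
      have hdec : xx = (∑ i' ∈ Finset.range (m + 1), Xm i') +
          (xx - ∑ i' ∈ Finset.range (m + 1), Xm i') := by abel
      have h1 : i xx (Jm m) = (∑ i' ∈ Finset.range (m + 1), i (Xm i') (Jm m)) +
          i (xx - ∑ i' ∈ Finset.range (m + 1), Xm i') (Jm m) := by
        conv_lhs => rw [hdec]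
        rw [map_add, map_sum]
        rw [DirectSum.add_apply]
        congr 1
        exact DFinsupp.finset_sum_apply _ _ _
      have h2 : (∑ i' ∈ Finset.range (m + 1), i (Xm i') (Jm m)) = i (Xm m) (Jm m) := by
        refine Finset.sum_eq_single_of_mem m (Finset.self_mem_range_succ m) ?_
        intro b hb hbne
        have hblt : b < m := lt_of_le_of_ne (Nat.lt_succ_iff.1 (Finset.mem_range.1 hb)) hbne
        refine (hspec b).2.2.2.2.2.2 _ ?_
        intro hmem
        exact (hspec m).2.2.2.1 (hFmono (Nat.succ_le_of_lt hblt)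
          (by rw [hFsucc b]; exact Finset.mem_union_right _ hmem))
      have h3 : i (xx - ∑ i' ∈ Finset.range (m + 1), Xm i') (Jm m) ∈ c.tr (Mh m) M := by
        refine c.tr_antitone (hspec m).2.2.2.2.2.1 ?_
        exact ptTrace_directSum_coord (ptTrace_map i (hTP _ _ (hym m))) _
      apply (hspec m).2.2.2.2.1
      have h5 : i (Xm m) (Jm m) +
          i (xx - ∑ i' ∈ Finset.range (m + 1), Xm i') (Jm m) = 0 := by
        rw [h0, h2] at h1
        exact h1.symm
      have h6 : i (Xm m) (Jm m) =
          -(i (xx - ∑ i' ∈ Finset.range (m + 1), Xm i') (Jm m)) :=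
        eq_neg_of_add_eq_zero_left h5
      rw [h6]
      exact neg_mem h3
    have hJm_inj : Function.Injective Jm := by
      have hlt : ∀ a b, a < b → Jm a ≠ Jm b := by
        intro a b hab heq
        have hJa : Jm a ∈ Sm a := by
          by_contra hnotin
          exact (hspec a).2.2.2.2.1 (by rw [(hspec a).2.2.2.2.2.2 _ hnotin]; exact zero_mem _)
        have : Jm a ∈ Fm b := hFmono (Nat.succ_le_of_lt hab)
          (by rw [hFsucc a]; exact Finset.mem_union_right _ hJa)
        rw [heq] at this
        exact (hspec b).2.2.2.1 this
      intro a b hab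
      by_contra hne
      rcases lt_or_gt_of_ne hne with h | h
      · exact hlt a b h hab
      · exact hlt b a h hab.symm
    have hsupp : ∀ m, Jm m ∈ ((i xx).support : Set J) := by
      intro m
      simp only [Finset.coe_sort_coe, Finset.mem_coe, DFinsupp.mem_support_iff]
      exact hJm_ne m
    exact (Set.Finite.not_infinite ((i xx).support.finite_toSet))
      (Set.infinite_of_injective_forall_mem hJm_inj hsupp)
  -- the cardinality endgame
  obtain ⟨k, F, hCh⟩ := chase
  obtain ⟨b, hbk, hbk1⟩ := ha k
  set xS : Set (Set (ℕ → M)) → ((ℕ × Set (ℕ → M)) → M) := fun S q =>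
    if q.1 = k ∧ q.2 ∈ S then b else 0 with hxS
  have hxST : ∀ S, xS S ∈ T k := by
    intro S q
    constructor
    · intro hq
      rw [hxS]
      simp only
      rw [if_neg]
      rintro ⟨h1, -⟩
      exact absurd h1 (Nat.ne_of_lt hq)
    · by_cases hcond : q.1 = k ∧ q.2 ∈ S
      · rw [hxS]
        simp only
        rw [if_pos hcond, hcond.1]
        exact hbk
      · rw [hxS]
        simp only
        rw [if_neg hcond]
        exact zero_mem _
  set Ψ : Set (Set (ℕ → M)) → (↑F → M ⧸ (c.tr (k + 1) M)) := fun S j =>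
    QuotientAddGroup.mk (i (xS S) ↑j) with hΨ
  have claim : ∀ S S' : Set (Set (ℕ → M)), Ψ S = Ψ S' → ∀ α, α ∈ S → α ∈ S' := by
    intro S S' hSS α hαS
    by_contra hαS'
    have hTt : xS S - xS S' ∈ T k := by
      intro q
      refine ⟨fun hq => ?_, ?_⟩
      · show xS S q - xS S' q = 0
        rw [(hxST S q).1 hq, (hxST S' q).1 hq, sub_self]
      · exact sub_mem (hxST S q).2 (hxST S' q).2
    have hcomps : ∀ j : J, i (xS S - xS S') j ∈ c.tr (k + 1) M := by
      intro j
      by_cases hj : j ∈ F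
      · have h1 := congrFun hSS ⟨j, hj⟩
        rw [hΨ] at h1
        simp only at h1
        have h2 : i (xS S) j - i (xS S') j ∈ c.tr (k + 1) M :=
          (QuotientAddGroup.eq_iff_sub_mem).1 h1
        rw [map_sub]
        exact h2
      · exact hCh (k + 1) _ hTt j hj
    have hD : i (xS S - xS S') ∈ ptTrace R (c.X (k + 1)) (c.ξ (k + 1))
        (DirectSum J fun _ : J => M) := mem_ptTrace_directSum hcomps
    have hP : xS S - xS S' ∈ ptTrace R (c.X (k + 1)) (c.ξ (k + 1))
        ((ℕ × Set (ℕ → M)) → M) := by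
      rw [← hpi' (xS S - xS S')]
      exact ptTrace_map p hD
    have hcoordv : (xS S - xS S') (k, α) ∈ c.tr (k + 1) M := ptTrace_pi_coord hP (k, α)
    have hv1 : xS S (k, α) = b := by
      rw [hxS]
      show (if ((k, α) : ℕ × Set (ℕ → M)).1 = k ∧ ((k, α) : ℕ × Set (ℕ → M)).2 ∈ S
        then b else 0) = b
      rw [if_pos ⟨rfl, hαS⟩]
    have hv2 : xS S' (k, α) = 0 := by
      rw [hxS]
      show (if ((k, α) : ℕ × Set (ℕ → M)).1 = k ∧ ((k, α) : ℕ × Set (ℕ → M)).2 ∈ S'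
        then b else 0) = 0
      rw [if_neg (by rintro ⟨-, h⟩; exact hαS' h)]
    have : (xS S - xS S') (k, α) = b := by
      show xS S (k, α) - xS S' (k, α) = b
      rw [hv1, hv2, sub_zero]
    rw [this] at hcoordv
    exact hbk1 hcoordv
  have hΨinj : Function.Injective Ψ := by
    intro S S' h
    exact Set.Subset.antisymm (claim S S' h) (claim S' S h.symm)
  -- now embed the target into `Set (ℕ → M)` and contradict Cantor
  set emb2 : (↑F → M) → (ℕ → M) := fun v n =>
    if h : n < Fintype.card ↑F then v ((Fintype.equivFin ↑F).symm ⟨n, h⟩) else 0 with hemb2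
  have hemb2inj : Function.Injective emb2 := by
    intro v v' h
    funext j
    have h1 := congrFun h ((Fintype.equivFin ↑F) j : Fin (Fintype.card ↑F)).val
    rw [hemb2] at h1
    simp only [Fin.is_lt, dif_pos, Fin.eta, Equiv.symm_apply_apply] at h1
    exact h1
  set final : Set (Set (ℕ → M)) → Set (ℕ → M) := fun S =>
    {emb2 fun j => (Ψ S j).out} with hfinal
  have hfinalinj : Function.Injective final := by
    intro S S' h
    apply hΨinj
    funext j
    have h1 : emb2 (fun j => (Ψ S j).out) = emb2 (fun j => (Ψ S' j).out) :=
      Set.singleton_injective h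
    have h2 : (fun j => (Ψ S j).out) = (fun j => (Ψ S' j).out) := hemb2inj h1
    have h3 := congrFun h2 j
    exact Quotient.out_injective h3
  exact Function.cantor_injective final hfinalinj

end ChaseArgument

section FinalGlue

variable {R : Type u} [Ring R]

theorem traceDCC_directSum' (M : Type u) [AddCommGroup M] [Module R M]
    (hsub : ∀ (X : Type u) (_ : AddCommGroup X) (_ : Module R X),
      MemProd R M X → MemAdd R M X) (J : Type u) (c : TrChain R) :
    ∃ n, c.tr n (DirectSum J fun _ : J => M) ≤ c.tr (n + 1) (DirectSum J fun _ : J => M) := by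
  obtain ⟨n, hn⟩ := traceDCC_of_hsub M hsub c
  refine ⟨n, fun y hy => ?_⟩
  rw [TrChain.tr_def] at hy ⊢
  exact mem_ptTrace_directSum fun j => hn (ptTrace_directSum_coord hy j)

end FinalGlue

/-- If `Prod(M) ⊆ Add(M)` then `M` is `Σ`-pure-injective. -/
theorem sigmaPureInjective_of_prod_subset_add {R : Type u} [Ring R]
    (M : Type u) [AddCommGroup M] [Module R M]
    (hsub : ∀ (X : Type u) (_ : AddCommGroup X) (_ : Module R X),
      MemProd R M X → MemAdd R M X) :
    IsSigmaPureInjective R M := by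
  intro J K L aK aL mK mL f hf g
  letI := aK
  letI := aL
  letI := mK
  letI := mL
  exact extension_exists f g (fun c => traceDCC_directSum' M hsub J c) hf
end
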